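/- arXiv:2401.01103 — 7 statements merged into one kernel-verified Lean document; each statement's English description precedes it below -/
import Mathlib

section
/- For every finite tree T on n ≥ 3 vertices there exist a vertex z of T and two subtrees T₁, T₂ of T (connected subgraphs of T) such that E(T₁) and E(T₂) are disjoint, E(T₁) ∪ E(T₂) = E(T), V(T₁) ∩ V(T₂) = {z}, and ⌈n/3⌉ ≤ |V(T₁)| ≤ ⌈2n/3⌉ and ⌈n/3⌉ ≤ |V(T₂)| ≤ ⌈2n/3⌉. -/
open SimpleGraph Set Finset

namespace CentroidBip

variable {V : Type*}

/-- The subgraph of `T` induced by a vertex set `A`. -/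
def sub (T : SimpleGraph V) (A : Set V) : T.Subgraph where
  verts := A
  Adj u v := u ∈ A ∧ v ∈ A ∧ T.Adj u v
  adj_sub h := h.2.2
  edge_vert h := h.1
  symm := ⟨fun u v h => ⟨h.2.1, h.1, h.2.2.symm⟩⟩

@[simp] lemma sub_verts (T : SimpleGraph V) (A : Set V) : (sub T A).verts = A := rfl
@[simp] lemma sub_adj (T : SimpleGraph V) (A : Set V) (u v : V) :
    (sub T A).Adj u v ↔ u ∈ A ∧ v ∈ A ∧ T.Adj u v := Iff.rfl

/-- `T` with the vertex `z` deleted. -/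
def del (T : SimpleGraph V) (z : V) : SimpleGraph {v : V // v ≠ z} := T.comap Subtype.val

@[simp] lemma del_adj (T : SimpleGraph V) (z : V) (u v : {v : V // v ≠ z}) :
    (del T z).Adj u v ↔ T.Adj u.1 v.1 := Iff.rfl

lemma reachable_del_of_walk (T : SimpleGraph V) {z : V} :
    ∀ {a b : V} (p : T.Walk a b), z ∉ p.support → ∀ (ha : a ≠ z) (hb : b ≠ z),
      (del T z).Reachable ⟨a, ha⟩ ⟨b, hb⟩ := by
  intro a b p
  induction p with
  | nil => intro _ ha hb; rfl
  | @cons a w b h q ih =>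
    intro hz ha hb
    rw [Walk.support_cons, List.mem_cons] at hz
    push_neg at hz
    have hw : w ≠ z := fun hwz => hz.2 (hwz ▸ q.start_mem_support)
    exact (Adj.reachable (by exact h : (del T z).Adj ⟨a, ha⟩ ⟨w, hw⟩)).trans (ih hz.2 hw hb)

lemma walk_of_reachable_del (T : SimpleGraph V) {z : V} {u v : {v : V // v ≠ z}}
    (h : (del T z).Reachable u v) : ∃ p : T.Walk u.1 v.1, z ∉ p.support := by
  obtain ⟨q⟩ := h
  refine ⟨q.map ⟨Subtype.val, fun h => h⟩, ?_⟩
  rw [Walk.support_map]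
  rintro hmem
  obtain ⟨x, _, hx⟩ := List.mem_map.mp hmem
  exact x.2 hx

lemma comp_eq_iff (T : SimpleGraph V) {z : V} (u v : {v : V // v ≠ z}) :
    (del T z).connectedComponentMk u = (del T z).connectedComponentMk v ↔
      ∃ p : T.Walk u.1 v.1, z ∉ p.support := by
  rw [ConnectedComponent.eq]
  constructor
  · exact walk_of_reachable_del T
  · rintro ⟨p, hp⟩
    have := reachable_del_of_walk T p hp u.2 v.2
    simpa using this

lemma comp_eq_of_adj (T : SimpleGraph V) {z : V} (u v : {v : V // v ≠ z})
    (h : T.Adj u.1 v.1) :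
    (del T z).connectedComponentMk u = (del T z).connectedComponentMk v :=
  ConnectedComponent.connectedComponentMk_eq_of_adj (by exact h)

lemma sub_reach (T : SimpleGraph V) {A : Set V} {z : V} (hz : z ∈ A)
    (hcl : ∀ u v : V, u ∈ A → u ≠ z → v ≠ z → T.Adj u v → v ∈ A) :
    ∀ {u b : V} (p : T.Walk u b) (hb : b = z) (hu : u ∈ A),
      (CentroidBip.sub T A).coe.Reachable ⟨u, hu⟩ ⟨z, hz⟩ := by
  intro u b p
  induction p with
  | @nil a => intro hb hu; subst a; rfl
  | @cons a w b h q ih =>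
    intro hb hu; subst b
    by_cases haz : a = z
    · subst a; rfl
    · by_cases hwz : w = z
      · subst w
        exact Adj.reachable (by exact ⟨hu, hz, h⟩ : (sub T A).coe.Adj ⟨a, hu⟩ ⟨z, hz⟩)
      · have hw : w ∈ A := hcl a w hu haz hwz h
        exact (Adj.reachable (by exact ⟨hu, hw, h⟩ :
          (sub T A).coe.Adj ⟨a, hu⟩ ⟨w, hw⟩)).trans (ih rfl hw)

lemma sub_connected (T : SimpleGraph V) (hc : T.Connected) {A : Set V} {z : V} (hz : z ∈ A)
    (hcl : ∀ u v : V, u ∈ A → u ≠ z → v ≠ z → T.Adj u v → v ∈ A) :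
    (CentroidBip.sub T A).Connected := by
  rw [Subgraph.connected_iff]
  refine ⟨⟨?_⟩, ⟨z, hz⟩⟩
  intro u v
  have h1 := sub_reach T hz hcl ((hc.preconnected u.1 z).some) rfl u.2
  have h2 := sub_reach T hz hcl ((hc.preconnected v.1 z).some) rfl v.2
  exact h1.trans h2.symm

/-- every vertex `≠ z` has, in its component of `T - z`, a neighbour of `z`. -/
lemma exists_adj_comp (T : SimpleGraph V) (hc : T.Preconnected) {z : V}
    (u : {v : V // v ≠ z}) :
    ∃ y : {v : V // v ≠ z}, T.Adj y.1 z ∧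
      (del T z).connectedComponentMk y = (del T z).connectedComponentMk u := by
  have key : ∀ {a b : V} (p : T.Walk a b) (hb : b = z) (ha : a ≠ z),
      ∃ y : {v : V // v ≠ z}, T.Adj y.1 z ∧
        (del T z).connectedComponentMk y = (del T z).connectedComponentMk ⟨a, ha⟩ := by
    intro a b p
    induction p with
    | @nil a => intro hb ha; exact absurd hb ha
    | @cons a w b h q ih =>
      intro hb ha; subst b
      by_cases hwz : w = z
      · exact ⟨⟨a, ha⟩, hwz ▸ h, rfl⟩
      · obtain ⟨y, hy1, hy2⟩ := ih rfl hwz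
        exact ⟨y, hy1, hy2.trans (comp_eq_of_adj T ⟨w, hwz⟩ ⟨a, ha⟩ h.symm)⟩
  exact key (hc u.1 z).some rfl u.2

section DecEq
variable [DecidableEq V]

/-- Core acyclicity fact: if `y ~ z`, a vertex cannot reach `z` avoiding `y` and also
reach `y` avoiding `z`. -/
lemma not_both (T : SimpleGraph V) (hT : T.IsTree) {y z u : V} (hadj : T.Adj y z)
    (p1 : T.Walk u z) (h1 : y ∉ p1.support) (p2 : T.Walk u y) (h2 : z ∉ p2.support) :
    False := by
  have hq1 : (p1.reverse.toPath : T.Walk z u).IsPath := p1.reverse.toPath.2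
  have hy1 : y ∉ (p1.reverse.toPath : T.Walk z u).support := by
    intro hmem
    exact h1 (by simpa [Walk.support_reverse] using
      Walk.support_toPath_subset p1.reverse hmem)
  have hq2 : (p2.reverse.toPath : T.Walk y u).IsPath := p2.reverse.toPath.2
  have hz2 : z ∉ (p2.reverse.toPath : T.Walk y u).support := by
    intro hmem
    exact h2 (by simpa [Walk.support_reverse] using
      Walk.support_toPath_subset p2.reverse hmem)
  have hq3 : (Walk.cons hadj.symm (p2.reverse.toPath : T.Walk y u)).IsPath :=
    hq2.cons hz2
  have heq := (hT.existsUnique_path z u).unique hq3 hq1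
  apply hy1
  rw [← heq, Walk.support_cons]
  exact List.mem_cons_of_mem _ (Walk.start_mem_support _)

/-- If `u ≠ y, z` cannot reach `z` avoiding `y`, then it reaches `y` avoiding `z`. -/
lemma reach_y_avoid_z (T : SimpleGraph V) (hc : T.Preconnected) {y z u : V}
    (hu : u ≠ z) (huy : u ≠ y) (hyz : y ≠ z)
    (hnot : ¬ ∃ p : T.Walk u z, y ∉ p.support) :
    ∃ p : T.Walk u y, z ∉ p.support := by
  obtain ⟨w, hw1, hw2⟩ := exists_adj_comp T hc (z := y) ⟨u, huy⟩
  obtain ⟨p, hp⟩ := (comp_eq_iff T _ _).mp hw2.symm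
  have hzp : z ∉ p.support := by
    intro hmem
    exact hnot ⟨p.takeUntil z hmem, fun hy =>
      hp (Walk.support_takeUntil_subset p hmem hy)⟩
  refine ⟨p.concat hw1, ?_⟩
  rw [Walk.support_concat]
  intro hmem
  rcases List.mem_append.mp hmem with h | h
  · exact hzp h
  · exact hyz (List.mem_singleton.mp h).symm

end DecEq
variable {V : Type*}

lemma ncard_fiber_sum {α κ : Type*} [Fintype α] (f : α → κ) (t : Finset κ) :
    {a : α | f a ∈ t}.ncard = ∑ c ∈ t, {a : α | f a = c}.ncard := by
  classical
  rw [Set.ncard_eq_toFinset_card', Set.toFinset_setOf]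
  rw [Finset.card_eq_sum_card_fiberwise
    (fun x hx => (Finset.mem_filter.mp hx).2 :
      ∀ x ∈ Finset.univ.filter (fun a => f a ∈ t), f x ∈ t)]
  refine Finset.sum_congr rfl fun c hc => ?_
  rw [Set.ncard_eq_toFinset_card', Set.toFinset_setOf]
  congr 1
  ext a
  simp only [Finset.mem_filter, Finset.mem_univ, true_and]
  exact ⟨fun h => h.2, fun h => ⟨h ▸ hc, h⟩⟩

lemma one_le_ncard_fiber {α κ : Type*} [Fintype α] (f : α → κ) (c : κ)
    (h : ∃ a, f a = c) : 1 ≤ {a : α | f a = c}.ncard := by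
  obtain ⟨a, ha⟩ := h
  exact (Set.ncard_pos (Set.toFinite _)).mpr ⟨a, ha⟩

lemma card_ne [Fintype V] [DecidableEq V] (z : V) :
    Fintype.card {v : V // v ≠ z} = Fintype.card V - 1 := by
  have := Fintype.card_subtype_compl (fun v : V => v = z)
  rw [Fintype.card_subtype_eq] at this
  exact this

lemma greedy {κ : Type*} [Fintype κ] (w : κ → ℕ) (n : ℕ) (hn : 3 ≤ n)
    (h1 : ∀ c, 1 ≤ w c) (h2 : ∀ c, w c ≤ n / 2)
    (hsum : ∑ x ∈ Finset.univ, w x = n - 1) :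
    ∃ S : Finset κ, (n + 2) / 3 ≤ (∑ x ∈ S, w x) + 1 ∧
      (∑ x ∈ S, w x) + 1 ≤ (2 * n + 2) / 3 ∧
      (n + 2) / 3 ≤ n - ∑ x ∈ S, w x ∧ n - (∑ x ∈ S, w x) ≤ (2 * n + 2) / 3 := by
  classical
  by_cases hA : ∃ c, n / 3 ≤ w c
  · obtain ⟨c, hc⟩ := hA
    have h2c := h2 c
    refine ⟨{c}, ?_, ?_, ?_, ?_⟩ <;> rw [Finset.sum_singleton] <;> omega
  · push_neg at hA
    have hub : ∀ c, w c ≤ n / 3 - 1 := fun c => by have := hA c; omega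
    obtain ⟨S, hSmem, hSmax⟩ := Finset.exists_max_image
      ((Finset.univ : Finset κ).powerset.filter fun S => ∑ x ∈ S, w x ≤ 2 * (n / 3) - 1)
      (fun S => ∑ x ∈ S, w x) ⟨∅, by simp⟩
    rw [Finset.mem_filter] at hSmem
    have hle : ∑ x ∈ S, w x ≤ 2 * (n / 3) - 1 := hSmem.2
    have hlow : n / 3 ≤ ∑ x ∈ S, w x := by
      by_contra hlt
      push_neg at hlt
      have hSne : S ≠ Finset.univ := by
        intro h
        rw [h, hsum] at hlt
        omega
      obtain ⟨c, hc⟩ : ∃ c, c ∉ S := by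
        by_contra hall
        push_neg at hall
        exact hSne (Finset.eq_univ_iff_forall.mpr hall)
      have hnew : ∑ x ∈ insert c S, w x ≤ 2 * (n / 3) - 1 := by
        rw [Finset.sum_insert hc]
        have := hub c
        omega
      have hmax := hSmax (insert c S) (Finset.mem_filter.mpr
        ⟨Finset.mem_powerset.mpr (Finset.subset_univ _), hnew⟩)
      rw [Finset.sum_insert hc] at hmax
      have := h1 c
      omega
    have hs_le : ∑ x ∈ S, w x ≤ n - 1 :=
      hsum ▸ Finset.sum_le_sum_of_subset (Finset.subset_univ S)
    exact ⟨S, by omega, by omega, by omega, by omega⟩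

lemma centroid [Fintype V] [DecidableEq V] (T : SimpleGraph V) (hT : T.IsTree)
    (hn : 3 ≤ Fintype.card V) :
    ∃ z : V, ∀ c : (del T z).ConnectedComponent,
      {v : {x : V // x ≠ z} | (del T z).connectedComponentMk v = c}.ncard
        ≤ Fintype.card V / 2 := by
  classical
  set n := Fintype.card V with hn'
  have hne : (Finset.univ : Finset V).Nonempty := by
    rw [Finset.univ_nonempty_iff]
    exact Fintype.card_pos_iff.mp (by omega)
  set fib : ∀ z : V, (del T z).ConnectedComponent → ℕ :=
    fun z c => {v : {x : V // x ≠ z} | (del T z).connectedComponentMk v = c}.ncard with hfib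
  set m : V → ℕ := fun z => sSup (Set.range (fib z)) with hm
  have hle_m : ∀ (z : V) (c), fib z c ≤ m z := fun z c =>
    le_csSup (Set.finite_range _).bddAbove ⟨c, rfl⟩
  obtain ⟨z, _, hzmin⟩ := Finset.exists_min_image Finset.univ m hne
  refine ⟨z, fun c => ?_⟩
  by_contra hbig
  push_neg at hbig
  have hbig' : n / 2 < fib z c := hbig
  obtain ⟨u, hu⟩ := c.exists_rep
  obtain ⟨y, hyadj, hyc⟩ := exists_adj_comp T hT.isConnected.preconnected u
  have hu' : (del T z).connectedComponentMk u = c := hu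
  rw [hu'] at hyc
  have hyz : y.1 ≠ z := y.2
  have hzy : z ≠ y.1 := hyz.symm
  -- the component of z in T - y
  set Cset : Set V := Subtype.val '' {v : {x : V // x ≠ z} |
    (del T z).connectedComponentMk v = c} with hCset
  have hCcard : Cset.ncard = fib z c :=
    Set.ncard_image_of_injective _ Subtype.val_injective
  have hyC : y.1 ∈ Cset := ⟨y, hyc, rfl⟩
  -- key bound on all components of T - y
  have key : ∀ d : (del T y.1).ConnectedComponent, fib y.1 d + 1 ≤ fib z c := by
    intro d
    set Dset : Set V := Subtype.val '' {v : {x : V // x ≠ y.1} |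
      (del T y.1).connectedComponentMk v = d} with hDset
    have hDcard : Dset.ncard = fib y.1 d :=
      Set.ncard_image_of_injective _ Subtype.val_injective
    by_cases hd : (del T y.1).connectedComponentMk ⟨z, hzy⟩ = d
    · -- d is the component of z : disjoint from Cset
      have hdisj : Disjoint Cset Dset := by
        rw [Set.disjoint_left]
        rintro v ⟨vc, hvc, rfl⟩ ⟨vd, hvd, hvd'⟩
        have hvz : (vc : V) ≠ z := vc.2
        have hvy : (vc : V) ≠ y.1 := by
          intro h
          exact (hvd' ▸ vd.2 : (vc:V) ≠ y.1) h
        -- walk from v to y avoiding z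
        obtain ⟨p2, hp2⟩ := (comp_eq_iff T vc y).mp (hvc.trans hyc.symm)
        -- walk from v to z avoiding y
        have hvd2 : (del T y.1).connectedComponentMk vd =
            (del T y.1).connectedComponentMk ⟨z, hzy⟩ := hvd.trans hd.symm
        obtain ⟨p1, hp1⟩ := (comp_eq_iff T vd ⟨z, hzy⟩).mp hvd2
        exact not_both T hT hyadj p1 hp1 (p2.copy hvd'.symm rfl)
          (by rwa [Walk.support_copy])
      have hun : (Cset ∪ Dset).ncard ≤ n := by
        rw [hn']
        have := Set.ncard_le_ncard (Set.subset_univ (Cset ∪ Dset)) (Set.toFinite _)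
        rwa [Set.ncard_univ, Nat.card_eq_fintype_card] at this
      rw [Set.ncard_union_eq hdisj (Set.toFinite _) (Set.toFinite _)] at hun
      omega
    · -- d is another component : it maps into Cset minus y
      have hsub : Dset ⊆ Cset \ {y.1} := by
        rintro v ⟨vd, hvd, rfl⟩
        have hvy : (vd : V) ≠ y.1 := vd.2
        have hvz : (vd : V) ≠ z := by
          rintro h
          apply hd
          rw [← hvd]
          congr 1
          exact Subtype.ext h.symm
        have hnot : ¬ ∃ p : T.Walk (vd : V) z, y.1 ∉ p.support := by
          rintro ⟨p, hp⟩
          apply hd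
          rw [← hvd]
          exact ((comp_eq_iff T vd ⟨z, hzy⟩).mpr ⟨p, hp⟩).symm
        obtain ⟨p, hp⟩ := reach_y_avoid_z T hT.isConnected.preconnected hvz hvy hyz hnot
        have : (del T z).connectedComponentMk ⟨vd, hvz⟩ = c := by
          rw [← hyc]
          exact (comp_eq_iff T ⟨(vd : V), hvz⟩ y).mpr ⟨p, hp⟩
        exact ⟨⟨⟨vd, hvz⟩, this, rfl⟩, hvy⟩
      have h1 : Dset.ncard ≤ (Cset \ {y.1}).ncard :=
        Set.ncard_le_ncard hsub (Set.toFinite _)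
      rw [Set.ncard_diff_singleton_of_mem hyC] at h1
      have hcpos : 1 ≤ Cset.ncard := (Set.ncard_pos (Set.toFinite _)).mpr ⟨y.1, hyC⟩
      omega
  -- contradiction with minimality
  have hrange_ne : (Set.range (fib y.1)).Nonempty :=
    ⟨fib y.1 ((del T y.1).connectedComponentMk ⟨z, hzy⟩), ⟨_, rfl⟩⟩
  have hmem := Set.Nonempty.csSup_mem hrange_ne (Set.finite_range _)
  obtain ⟨d, hd⟩ := hmem
  have h1 : m y.1 = fib y.1 d := hd.symm
  have h2 : fib z c ≤ m z := hle_m z c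
  have h3 : m z ≤ m y.1 := hzmin y.1 (Finset.mem_univ _)
  have h4 := key d
  omega

end CentroidBip

/-- **Centroid bipartition.** For every finite tree `T` on `n ≥ 3` vertices there exist a
vertex `z` and two subtrees `T₁`, `T₂` of `T` (connected subgraphs of `T`) such that
`E(T₁)` and `E(T₂)` are disjoint, `E(T₁) ∪ E(T₂) = E(T)`, `V(T₁) ∩ V(T₂) = {z}`, and
`⌈n/3⌉ ≤ |V(T₁)| ≤ ⌈2n/3⌉`, `⌈n/3⌉ ≤ |V(T₂)| ≤ ⌈2n/3⌉`.
(Here `⌈n/3⌉ = (n+2)/3` and `⌈2n/3⌉ = (2n+2)/3` in natural-number division.) -/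
theorem tree_centroid_bipartition {V : Type*} [Fintype V]
    (T : SimpleGraph V) (hT : T.IsTree) (hn : 3 ≤ Fintype.card V) :
    ∃ (z : V) (T1 T2 : T.Subgraph), T1.Connected ∧ T2.Connected ∧
      Disjoint T1.edgeSet T2.edgeSet ∧
      T1.edgeSet ∪ T2.edgeSet = T.edgeSet ∧
      T1.verts ∩ T2.verts = {z} ∧
      (Fintype.card V + 2) / 3 ≤ T1.verts.ncard ∧
      T1.verts.ncard ≤ (2 * Fintype.card V + 2) / 3 ∧
      (Fintype.card V + 2) / 3 ≤ T2.verts.ncard ∧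
      T2.verts.ncard ≤ (2 * Fintype.card V + 2) / 3 := by
  classical
  obtain ⟨z, hz⟩ := CentroidBip.centroid T hT hn
  haveI : Fintype (CentroidBip.del T z).ConnectedComponent := Fintype.ofFinite _
  set n := Fintype.card V with hn'
  set mk := (CentroidBip.del T z).connectedComponentMk with hmk
  set w : (CentroidBip.del T z).ConnectedComponent → ℕ :=
    fun c => {v : {x : V // x ≠ z} | mk v = c}.ncard with hw
  have hw1 : ∀ c, 1 ≤ w c := fun c => by
    obtain ⟨u, hu⟩ := c.exists_rep
    exact CentroidBip.one_le_ncard_fiber mk c ⟨u, hu⟩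
  have hw2 : ∀ c, w c ≤ n / 2 := hz
  have hsum : ∑ x ∈ Finset.univ, w x = n - 1 := by
    have h := CentroidBip.ncard_fiber_sum mk
      (Finset.univ : Finset (CentroidBip.del T z).ConnectedComponent)
    have h2 : {a : {x : V // x ≠ z} |
        mk a ∈ (Finset.univ : Finset (CentroidBip.del T z).ConnectedComponent)} =
        Set.univ := by
      ext a; simp
    rw [h2, Set.ncard_univ, Nat.card_eq_fintype_card, CentroidBip.card_ne] at h
    exact h.symm
  obtain ⟨S, hS1, hS2, hS3, hS4⟩ := CentroidBip.greedy w n hn hw1 hw2 hsum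
  set A1 : Set V := insert z (Subtype.val '' {v | mk v ∈ S}) with hA1
  set A2 : Set V := insert z (Subtype.val '' {v | mk v ∉ S}) with hA2
  have hmem1 : ∀ v : V, v ∈ A1 ↔ v = z ∨ ∃ h : v ≠ z, mk ⟨v, h⟩ ∈ S := by
    intro v
    simp only [hA1, Set.mem_insert_iff, Set.mem_image, Set.mem_setOf_eq]
    constructor
    · rintro (rfl | ⟨x, hx, rfl⟩)
      · exact Or.inl rfl
      · exact Or.inr ⟨x.2, hx⟩
    · rintro (rfl | ⟨h, hm⟩)
      · exact Or.inl rfl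
      · exact Or.inr ⟨⟨v, h⟩, hm, rfl⟩
  have hmem2 : ∀ v : V, v ∈ A2 ↔ v = z ∨ ∃ h : v ≠ z, mk ⟨v, h⟩ ∉ S := by
    intro v
    simp only [hA2, Set.mem_insert_iff, Set.mem_image, Set.mem_setOf_eq]
    constructor
    · rintro (rfl | ⟨x, hx, rfl⟩)
      · exact Or.inl rfl
      · exact Or.inr ⟨x.2, hx⟩
    · rintro (rfl | ⟨h, hm⟩)
      · exact Or.inl rfl
      · exact Or.inr ⟨⟨v, h⟩, hm, rfl⟩
  have hadjcomp : ∀ (u v : V) (hu : u ≠ z) (hv : v ≠ z), T.Adj u v →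
      mk ⟨u, hu⟩ = mk ⟨v, hv⟩ := fun u v hu hv h =>
    CentroidBip.comp_eq_of_adj T ⟨u, hu⟩ ⟨v, hv⟩ h
  have hcl1 : ∀ u v : V, u ∈ A1 → u ≠ z → v ≠ z → T.Adj u v → v ∈ A1 := by
    intro u v hu huz hvz hadj
    rw [hmem1] at hu ⊢
    rcases hu with rfl | ⟨h, hm⟩
    · exact absurd rfl huz
    · exact Or.inr ⟨hvz, (hadjcomp u v h hvz hadj) ▸ hm⟩
  have hcl2 : ∀ u v : V, u ∈ A2 → u ≠ z → v ≠ z → T.Adj u v → v ∈ A2 := by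
    intro u v hu huz hvz hadj
    rw [hmem2] at hu ⊢
    rcases hu with rfl | ⟨h, hm⟩
    · exact absurd rfl huz
    · exact Or.inr ⟨hvz, (hadjcomp u v h hvz hadj) ▸ hm⟩
  have hzA1 : z ∈ A1 := Set.mem_insert _ _
  have hzA2 : z ∈ A2 := Set.mem_insert _ _
  -- cardinalities
  have hnc1 : A1.ncard = (∑ x ∈ S, w x) + 1 := by
    rw [hA1, Set.ncard_insert_of_notMem (by rintro ⟨x, _, hx⟩; exact x.2 hx),
      Set.ncard_image_of_injective _ Subtype.val_injective,
      CentroidBip.ncard_fiber_sum mk S]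
  have hnc2 : A2.ncard = (∑ x ∈ Sᶜ, w x) + 1 := by
    have hset : {v : {x : V // x ≠ z} | mk v ∉ S} = {v | mk v ∈ Sᶜ} := by
      ext v; simp
    rw [hA2, Set.ncard_insert_of_notMem (by rintro ⟨x, _, hx⟩; exact x.2 hx),
      Set.ncard_image_of_injective _ Subtype.val_injective, hset,
      CentroidBip.ncard_fiber_sum mk Sᶜ]
  have hcompl : (∑ x ∈ Sᶜ, w x) + (∑ x ∈ S, w x) = n - 1 := by
    rw [Finset.sum_compl_add_sum]
    exact hsum
  refine ⟨z, CentroidBip.sub T A1, CentroidBip.sub T A2,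
    CentroidBip.sub_connected T hT.isConnected hzA1 hcl1,
    CentroidBip.sub_connected T hT.isConnected hzA2 hcl2, ?_, ?_, ?_, ?_, ?_, ?_, ?_⟩
  · -- disjoint edge sets
    rw [Set.disjoint_left]
    intro e he1 he2
    induction e using Sym2.ind with
    | _ u v =>
      rw [SimpleGraph.Subgraph.mem_edgeSet] at he1 he2
      obtain ⟨hu1, hv1, hadj⟩ := he1
      obtain ⟨hu2, hv2, -⟩ := he2
      have huz : u = z := by
        by_contra huz
        rcases (hmem1 u).mp hu1 with rfl | ⟨h, hm⟩
        · exact huz rfl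
        · rcases (hmem2 u).mp hu2 with rfl | ⟨h', hm'⟩
          · exact huz rfl
          · exact hm' hm
      have hvz : v = z := by
        by_contra hvz
        rcases (hmem1 v).mp hv1 with rfl | ⟨h, hm⟩
        · exact hvz rfl
        · rcases (hmem2 v).mp hv2 with rfl | ⟨h', hm'⟩
          · exact hvz rfl
          · exact hm' hm
      exact hadj.ne (huz.trans hvz.symm)
  · -- union of edge sets
    ext e
    induction e using Sym2.ind with
    | _ u v =>
      simp only [Set.mem_union, SimpleGraph.Subgraph.mem_edgeSet,
        SimpleGraph.mem_edgeSet, CentroidBip.sub_adj]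
      constructor
      · rintro (⟨-, -, h⟩ | ⟨-, -, h⟩) <;> exact h
      · intro h
        by_cases huz : u = z
        · subst u
          have hvz : v ≠ z := h.ne'
          by_cases hvS : mk ⟨v, hvz⟩ ∈ S
          · exact Or.inl ⟨hzA1, (hmem1 v).mpr (Or.inr ⟨hvz, hvS⟩), h⟩
          · exact Or.inr ⟨hzA2, (hmem2 v).mpr (Or.inr ⟨hvz, hvS⟩), h⟩
        · by_cases hvz : v = z
          · subst v
            by_cases huS : mk ⟨u, huz⟩ ∈ S
            · exact Or.inl ⟨(hmem1 u).mpr (Or.inr ⟨huz, huS⟩), hzA1, h⟩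
            · exact Or.inr ⟨(hmem2 u).mpr (Or.inr ⟨huz, huS⟩), hzA2, h⟩
          · have hc := hadjcomp u v huz hvz h
            by_cases huS : mk ⟨u, huz⟩ ∈ S
            · exact Or.inl ⟨(hmem1 u).mpr (Or.inr ⟨huz, huS⟩),
                (hmem1 v).mpr (Or.inr ⟨hvz, hc ▸ huS⟩), h⟩
            · exact Or.inr ⟨(hmem2 u).mpr (Or.inr ⟨huz, huS⟩),
                (hmem2 v).mpr (Or.inr ⟨hvz, hc ▸ huS⟩), h⟩
  · -- vertex intersection
    ext v
    simp only [Set.mem_inter_iff, Set.mem_singleton_iff, CentroidBip.sub_verts]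
    constructor
    · rintro ⟨h1, h2⟩
      by_contra hvz
      rcases (hmem1 v).mp h1 with rfl | ⟨h, hm⟩
      · exact hvz rfl
      · rcases (hmem2 v).mp h2 with rfl | ⟨h', hm'⟩
        · exact hvz rfl
        · exact hm' hm
    · rintro rfl
      exact ⟨hzA1, hzA2⟩
  · show (n + 2) / 3 ≤ A1.ncard
    omega
  · show A1.ncard ≤ (2 * n + 2) / 3
    omega
  · show (n + 2) / 3 ≤ A2.ncard
    omega
  · show A2.ncard ≤ (2 * n + 2) / 3
    omega
end

section
/- Fix L ∈ ℕ, p = 2^L, and a real ε₂ > 0. Let M(i,j) ∈ [0,∞] be given for all 0 ≤ i ≤ L and 0 ≤ j < 2^i, satisfying the dyadic consistency M(i,j) = min(M(i+1, 2j), M(i+1, 2j+1)) for all 0 ≤ i < L and 0 ≤ j < 2^i. Let Φ(i,j) be the predicate: j = 0, or (1+ε₂)·M(i,j) < min_{0 ≤ j' < j} M(i,j'). Suppose r(i,j) ∈ [0,∞] (defined for 0 ≤ i ≤ L, 0 ≤ j < 2^i) satisfies: (1) for every i and every j with 1 ≤ j < 2^i, min_{0 ≤ j' ≤ j} M(i,j')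 ≤ r(i,j) ≤ r(i,j−1); and (2) whenever Φ(i,j) holds, r(i,j) = M(i,j). For 1 ≤ f ≤ p−1 let j(i,f) = ⌊f·2^i/p⌋, let r'(f) be the minimum of r(i, j(i,f)−1) over all 0 ≤ i ≤ L with j(i,f) ≥ 1, and let m(f) = min_{0 ≤ j < f} M(L,j). Then m(f) ≤ r'(f) ≤ (1+ε₂)^L · m(f) for every 1 ≤ f ≤ p−1. -/
open scoped ENNReal

private lemma nat_double_div (x m : ℕ) (hm : 0 < m) :
    2 * x / m = 2 * (x / m) ∨ 2 * x / m = 2 * (x / m) + 1 := by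
  have hx := Nat.div_add_mod x m
  have hs := Nat.mod_lt x hm
  have h1 : 2 * (x / m) ≤ 2 * x / m := by
    rw [Nat.le_div_iff_mul_le hm]
    have h : 2 * (x / m) * m = 2 * (m * (x / m)) := by ring
    omega
  have h2 : 2 * x / m < 2 * (x / m) + 2 := by
    rw [Nat.div_lt_iff_lt_mul hm]
    have h : (2 * (x / m) + 2) * m = 2 * (m * (x / m)) + 2 * m := by ring
    omega
  omega

private lemma prefix_one (L : ℕ) (M : ℕ → ℕ → ℝ≥0∞)
    (hM : ∀ i < L, ∀ j < 2 ^ i,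
      M i j = min (M (i + 1) (2 * j)) (M (i + 1) (2 * j + 1)))
    {i : ℕ} (hi : i < L) :
    ∀ j ≤ 2 ^ i,
      (Finset.range (2 * j)).inf (M (i + 1)) = (Finset.range j).inf (M i) := by
  intro j
  induction j with
  | zero => intro _; simp
  | succ j ih =>
    intro hj
    have h1 : 2 * (j + 1) = (2 * j + 1) + 1 := by ring
    rw [h1, Finset.range_add_one, Finset.inf_insert, Finset.range_add_one, Finset.inf_insert,
      ih (by omega), Finset.range_add_one, Finset.inf_insert, hM i hi j (by omega)]
    have : min (M (i + 1) (2 * j)) (M (i + 1) (2 * j + 1))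
        = M (i + 1) (2 * j) ⊓ M (i + 1) (2 * j + 1) := rfl
    rw [this, inf_left_comm, inf_assoc]

private lemma prefix_many (L : ℕ) (M : ℕ → ℕ → ℝ≥0∞)
    (hM : ∀ i < L, ∀ j < 2 ^ i,
      M i j = min (M (i + 1) (2 * j)) (M (i + 1) (2 * j + 1))) :
    ∀ k i, i + k ≤ L → ∀ j ≤ 2 ^ i,
      (Finset.range (j * 2 ^ k)).inf (M (i + k)) = (Finset.range j).inf (M i) := by
  intro k
  induction k with
  | zero => intro i _ j _; simp
  | succ k ih =>
    intro i hik j hj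
    have h1 : j * 2 ^ (k + 1) = (2 * j) * 2 ^ k := by ring
    have h2 : i + (k + 1) = (i + 1) + k := by ring
    have h3 : 2 * j ≤ 2 ^ (i + 1) := by rw [pow_succ]; omega
    rw [h1, h2, ih (i + 1) (by omega) (2 * j) h3, prefix_one L M hM (by omega) j hj]

/-- **Abstract correctness of the progressive-Dijkstra data (Lemma on the DP-oracle).**
Fix `L`, `p = 2^L`, `ε₂ > 0`.  `M i j ∈ [0,∞]` (for `i ≤ L`, `j < 2^i`) satisfies the dyadic
consistency `M i j = min (M (i+1) (2j)) (M (i+1) (2j+1))`.  `Φ i j` is the predicate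
`j = 0 ∨ (1+ε₂)·M i j < min_{j' < j} M i j'`.  Suppose `r i j` satisfies:
(1) `min_{j' ≤ j} M i j' ≤ r i j ≤ r i (j−1)` for `1 ≤ j < 2^i`;
(2) if `Φ i j` holds then `r i j = M i j`.
For `1 ≤ f ≤ p − 1` let `j(i,f) = ⌊f·2^i/p⌋`, let `r' f` be the minimum of
`r i (j(i,f) − 1)` over all `i ≤ L` with `j(i,f) ≥ 1`, and `m f = min_{j < f} M L j`.
Then `m f ≤ r' f ≤ (1+ε₂)^L · m f`. -/
theorem progressive_dijkstra_approx (L : ℕ) (ε₂ : ℝ) (hε : 0 < ε₂)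
    (M r : ℕ → ℕ → ℝ≥0∞)
    (hM : ∀ i < L, ∀ j < 2 ^ i,
      M i j = min (M (i + 1) (2 * j)) (M (i + 1) (2 * j + 1)))
    (hr1 : ∀ i ≤ L, ∀ j, 1 ≤ j → j < 2 ^ i →
      (Finset.range (j + 1)).inf (M i) ≤ r i j ∧ r i j ≤ r i (j - 1))
    (hr2 : ∀ i ≤ L, ∀ j < 2 ^ i,
      (j = 0 ∨ ENNReal.ofReal (1 + ε₂) * M i j < (Finset.range j).inf (M i)) →
      r i j = M i j) :
    ∀ f, 1 ≤ f → f ≤ 2 ^ L - 1 →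
      (Finset.range f).inf (M L) ≤
        ((Finset.range (L + 1)).filter
            (fun i => 1 ≤ f * 2 ^ i / 2 ^ L)).inf
          (fun i => r i (f * 2 ^ i / 2 ^ L - 1)) ∧
      ((Finset.range (L + 1)).filter
            (fun i => 1 ≤ f * 2 ^ i / 2 ^ L)).inf
          (fun i => r i (f * 2 ^ i / 2 ^ L - 1)) ≤
        ENNReal.ofReal ((1 + ε₂) ^ L) * (Finset.range f).inf (M L) := by
  intro f hf1 hf2
  have hp : 0 < 2 ^ L := Nat.two_pow_pos L
  have hfp : f < 2 ^ L := by omega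
  set C : ℝ≥0∞ := ENNReal.ofReal (1 + ε₂) with hC
  have hC1 : (1 : ℝ≥0∞) ≤ C := by
    rw [hC, ← ENNReal.ofReal_one]
    exact ENNReal.ofReal_le_ofReal (by linarith)
  have hCk : ∀ k : ℕ, (1 : ℝ≥0∞) ≤ C ^ k := fun k => by
    induction k with
    | zero => simp
    | succ n ihn => rw [pow_succ]; exact le_trans ihn (le_mul_of_one_le_right' hC1)
  -- basic facts about g i := f * 2^i / 2^L
  have hglt : ∀ i : ℕ, f * 2 ^ i / 2 ^ L < 2 ^ i := by
    intro i
    rw [Nat.div_lt_iff_lt_mul hp]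
    calc f * 2 ^ i < 2 ^ L * 2 ^ i := by
          exact mul_lt_mul_of_pos_right hfp (Nat.two_pow_pos i)
      _ = 2 ^ i * 2 ^ L := mul_comm _ _
  have hgL : f * 2 ^ L / 2 ^ L = f := Nat.mul_div_cancel f hp
  -- Bmono: the global min is ≤ the level-i prefix min
  have Bmono : ∀ i ≤ L,
      (Finset.range f).inf (M L) ≤ (Finset.range (f * 2 ^ i / 2 ^ L)).inf (M i) := by
    intro i hi
    have h := prefix_many L M hM (L - i) i (by omega) (f * 2 ^ i / 2 ^ L) (le_of_lt (hglt i))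
    rw [show i + (L - i) = L from by omega] at h
    rw [← h]
    apply Finset.inf_mono
    apply Finset.range_subset_range.2
    -- (f*2^i/2^L) * 2^(L-i) ≤ f
    have e1 : f * 2 ^ i / 2 ^ L = f / 2 ^ (L - i) := by
      rw [show (2 : ℕ) ^ L = 2 ^ i * 2 ^ (L - i) from by rw [← pow_add]; congr 1; omega,
        ← Nat.div_div_eq_div_mul, Nat.mul_div_cancel f (Nat.two_pow_pos i)]
    rw [e1]
    exact Nat.div_mul_le_self f _
  -- lower bound per element of the filter
  have lower : ∀ i ∈ (Finset.range (L + 1)).filter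
      (fun i => 1 ≤ f * 2 ^ i / 2 ^ L),
      (Finset.range f).inf (M L) ≤ r i (f * 2 ^ i / 2 ^ L - 1) := by
    intro i hi
    obtain ⟨hiR, hg1⟩ := Finset.mem_filter.1 hi
    have hiL : i ≤ L := by have := Finset.mem_range.1 hiR; omega
    rcases eq_or_lt_of_le hg1 with h1 | h2
    · -- g i = 1
      have hr := hr2 i hiL 0 (Nat.two_pow_pos i) (Or.inl rfl)
      have : r i (f * 2 ^ i / 2 ^ L - 1) = M i 0 := by rw [← h1]; simpa using hr
      rw [this]
      have := Bmono i hiL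
      rw [← h1] at this
      simpa using this
    · -- 2 ≤ g i
      have h := (hr1 i hiL (f * 2 ^ i / 2 ^ L - 1) (by omega) (by have := hglt i; omega)).1
      rw [show f * 2 ^ i / 2 ^ L - 1 + 1 = f * 2 ^ i / 2 ^ L from by omega] at h
      exact (Bmono i hiL).trans h
  -- upper bound by induction on i
  have upper : ∀ i ≤ L, 1 ≤ f * 2 ^ i / 2 ^ L →
      ((Finset.range (L + 1)).filter (fun i => 1 ≤ f * 2 ^ i / 2 ^ L)).inf
          (fun i => r i (f * 2 ^ i / 2 ^ L - 1))
        ≤ C ^ i * (Finset.range (f * 2 ^ i / 2 ^ L)).inf (M i) := by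
    intro i
    induction i with
    | zero =>
      intro _ h
      exfalso
      have : f * 2 ^ 0 / 2 ^ L = 0 := by
        rw [Nat.div_eq_of_lt (by simpa using hfp)]
      omega
    | succ i ih =>
      intro hiL hg1
      have hiL' : i ≤ L := by omega
      have hmem : (i + 1) ∈ (Finset.range (L + 1)).filter
          (fun i => 1 ≤ f * 2 ^ i / 2 ^ L) :=
        Finset.mem_filter.2 ⟨Finset.mem_range.2 (by omega), hg1⟩
      have hinfle : ((Finset.range (L + 1)).filter (fun i => 1 ≤ f * 2 ^ i / 2 ^ L)).inf
            (fun i => r i (f * 2 ^ i / 2 ^ L - 1))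
          ≤ r (i + 1) (f * 2 ^ (i + 1) / 2 ^ L - 1) := Finset.inf_le hmem
      have hdd : f * 2 ^ (i + 1) = 2 * (f * 2 ^ i) := by ring
      have hstep := nat_double_div (f * 2 ^ i) (2 ^ L) hp
      rw [← hdd] at hstep
      by_cases hgi0 : f * 2 ^ i / 2 ^ L = 0
      · -- g (i+1) = 1
        have hg11 : f * 2 ^ (i + 1) / 2 ^ L = 1 := by omega
        have hr := hr2 (i + 1) hiL 0 (Nat.two_pow_pos _) (Or.inl rfl)
        rw [hg11]
        calc ((Finset.range (L + 1)).filter (fun i => 1 ≤ f * 2 ^ i / 2 ^ L)).inf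
              (fun i => r i (f * 2 ^ i / 2 ^ L - 1))
            ≤ r (i + 1) (f * 2 ^ (i + 1) / 2 ^ L - 1) := hinfle
          _ = M (i + 1) 0 := by rw [hg11]; simpa using hr
          _ = (Finset.range 1).inf (M (i + 1)) := by simp
          _ ≤ C ^ (i + 1) * (Finset.range 1).inf (M (i + 1)) :=
              le_mul_of_one_le_left' (hCk (i + 1))
      · have hgi1 : 1 ≤ f * 2 ^ i / 2 ^ L := by omega
        have hIH := ih hiL' hgi1
        rcases hstep with h | h
        · -- g (i+1) = 2 * g i : prefix min unchanged
          have hQ : (Finset.range (f * 2 ^ (i + 1) / 2 ^ L)).inf (M (i + 1))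
              = (Finset.range (f * 2 ^ i / 2 ^ L)).inf (M i) := by
            rw [h]
            exact prefix_one L M hM (by omega) _ (le_of_lt (hglt i))
          rw [hQ]
          exact hIH.trans (mul_le_mul_left (pow_le_pow_right' hC1 (by omega)) _)
        · -- g (i+1) = 2 * g i + 1 : a new block b appears
          set b := 2 * (f * 2 ^ i / 2 ^ L) with hb
          have hbprefix : (Finset.range b).inf (M (i + 1))
              = (Finset.range (f * 2 ^ i / 2 ^ L)).inf (M i) :=
            prefix_one L M hM (by omega) _ (le_of_lt (hglt i))
          have hblt : b < 2 ^ (i + 1) := by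
            have := hglt i
            rw [pow_succ]
            omega
          have hQ : (Finset.range (f * 2 ^ (i + 1) / 2 ^ L)).inf (M (i + 1))
              = M (i + 1) b ⊓ (Finset.range (f * 2 ^ i / 2 ^ L)).inf (M i) := by
            rw [h, Finset.range_add_one, Finset.inf_insert, hbprefix]
          by_cases hphi : C * M (i + 1) b < (Finset.range b).inf (M (i + 1))
          · -- Φ holds at (i+1, b): r is exact there
            have hr := hr2 (i + 1) hiL b hblt (Or.inr hphi)
            have hMle : M (i + 1) b ≤ (Finset.range (f * 2 ^ i / 2 ^ L)).inf (M i) := by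
              rw [hbprefix] at hphi
              exact le_trans (le_mul_of_one_le_left' hC1) hphi.le
            rw [hQ, inf_eq_left.2 hMle]
            calc ((Finset.range (L + 1)).filter (fun i => 1 ≤ f * 2 ^ i / 2 ^ L)).inf
                  (fun i => r i (f * 2 ^ i / 2 ^ L - 1))
                ≤ r (i + 1) (f * 2 ^ (i + 1) / 2 ^ L - 1) := hinfle
              _ = M (i + 1) b := by
                  rw [show f * 2 ^ (i + 1) / 2 ^ L - 1 = b from by omega, hr]
              _ ≤ C ^ (i + 1) * M (i + 1) b := le_mul_of_one_le_left' (hCk (i + 1))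
          · -- Φ fails: prefix min drops by at most a factor C
            push_neg at hphi
            rw [hbprefix] at hphi
            have hQge : (Finset.range (f * 2 ^ i / 2 ^ L)).inf (M i)
                ≤ C * (Finset.range (f * 2 ^ (i + 1) / 2 ^ L)).inf (M (i + 1)) := by
              rw [hQ]
              rcases le_total (M (i + 1) b)
                  ((Finset.range (f * 2 ^ i / 2 ^ L)).inf (M i)) with hc | hc
              · rw [inf_eq_left.2 hc]; exact hphi
              · rw [inf_eq_right.2 hc]; exact le_mul_of_one_le_left' hC1
            calc ((Finset.range (L + 1)).filter (fun i => 1 ≤ f * 2 ^ i / 2 ^ L)).inf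
                  (fun i => r i (f * 2 ^ i / 2 ^ L - 1))
                ≤ C ^ i * (Finset.range (f * 2 ^ i / 2 ^ L)).inf (M i) := hIH
              _ ≤ C ^ i * (C * (Finset.range (f * 2 ^ (i + 1) / 2 ^ L)).inf (M (i + 1))) :=
                  mul_le_mul_right hQge _
              _ = C ^ (i + 1) * (Finset.range (f * 2 ^ (i + 1) / 2 ^ L)).inf (M (i + 1)) := by
                  ring
  constructor
  · exact Finset.le_inf lower
  · have h := upper L le_rfl (by rw [hgL]; exact hf1)
    rw [hgL] at h
    calc ((Finset.range (L + 1)).filter (fun i => 1 ≤ f * 2 ^ i / 2 ^ L)).inf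
          (fun i => r i (f * 2 ^ i / 2 ^ L - 1))
        ≤ C ^ L * (Finset.range f).inf (M L) := h
      _ = ENNReal.ofReal ((1 + ε₂) ^ L) * (Finset.range f).inf (M L) := by
          rw [hC, ← ENNReal.ofReal_pow (by linarith)]
end

section
/- For every failed vertex v_f ∈ V(P) \ {s} and every destination t ∈ V(G) \ {v_f}, it holds that dist_{G−v_f}(s,t) = min( ddist_{G−v_f}(s,t), jdist_{G−v_f}(s,t) ). -/
open scoped ENNReal

/-- A directed graph on vertex type `V` with real edge weights. -/
structure WDigraph (V : Type) where
  Adj : V → V → Prop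
  w : V → V → ℝ

namespace WDigraph

variable {V : Type}

/-- The weighted length of a walk, given as the list of its vertices:
the sum of the weights of consecutive pairs. -/
def len (G : WDigraph V) (l : List V) : ℝ :=
  ((l.zip l.tail).map fun p => G.w p.1 p.2).sum

/-- `l` is a (simple) path from `u` to `v` in `G`: a nonempty list of pairwise distinct
vertices, consecutively joined by edges of `G`, starting at `u` and ending at `v`. -/
def IsPathFrom (G : WDigraph V) (u v : V) (l : List V) : Prop :=
  l.Chain' G.Adj ∧ l.Nodup ∧ l.head? = some u ∧ l.getLast? = some v

/-- The distance from `u` to `v` in `G`: the minimum length of a path from `u` to `v`,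
equal to `∞` if no such path exists. -/
noncomputable def dist (G : WDigraph V) (u v : V) : ℝ≥0∞ :=
  ⨅ (l : List V) (_ : G.IsPathFrom u v l), ENNReal.ofReal (G.len l)

/-- `G − x`: the graph obtained from `G` by deleting the vertex `x`
and all edges incident to it. -/
def deleteVert (G : WDigraph V) (x : V) : WDigraph V where
  Adj a b := G.Adj a b ∧ a ≠ x ∧ b ≠ x
  w := G.w

/-- `G[Ψ(U)]`: the subgraph of `G` consisting of the edges with at least one endpoint
in `U` (and their endpoints). -/
def psiSub (G : WDigraph V) (U : Set V) : WDigraph V where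
  Adj a b := G.Adj a b ∧ (a ∈ U ∨ b ∈ U)
  w := G.w

/-- All edge weights of `G` are positive. -/
def PosWeights (G : WDigraph V) : Prop := ∀ a b, G.Adj a b → 0 < G.w a b

end WDigraph

/-- Every prefix of the path `P` (starting at `s`) is a shortest path in `G`. -/
def ShortestPrefixes {V : Type} (G : WDigraph V) (s : V) (P : List V) : Prop :=
  ∀ k < P.length, ENNReal.ofReal (G.len (P.take (k + 1))) = G.dist s (P.getD k s)
/-- `R` is a *departing* `s`–`t` path avoiding the failed vertex `v_f = P[f]`:
an `s`–`t` path in `G − P[f]` such that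
(C1) the vertices of `R` lying on `P[0, f−1]` form a prefix of `R`, and
(C2) no vertex of `R` other than possibly its last lies on `P[f+1, p−1]`. -/
def IsDeparting {V : Type} (G : WDigraph V) (P : List V) (f : ℕ) (s t : V)
    (R : List V) : Prop :=
  (G.deleteVert (P.getD f s)).IsPathFrom s t R ∧
  (∃ k, (∀ a ∈ R.take k, a ∈ P.take f) ∧ (∀ a ∈ R.drop k, a ∉ P.take f)) ∧
  (∀ a ∈ R.dropLast, a ∉ P.drop (f + 1))

/-- `R` is a *jumping* `s`–`t` path avoiding the failed vertex `v_f = P[f]`: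
an `s`–`t` path in `G − P[f]` satisfying (C1) and
(C3) some vertex of `R` other than its last lies on `P[f+1, p−1]`. -/
def IsJumping {V : Type} (G : WDigraph V) (P : List V) (f : ℕ) (s t : V)
    (R : List V) : Prop :=
  (G.deleteVert (P.getD f s)).IsPathFrom s t R ∧
  (∃ k, (∀ a ∈ R.take k, a ∈ P.take f) ∧ (∀ a ∈ R.drop k, a ∉ P.take f)) ∧
  (∃ a ∈ R.dropLast, a ∈ P.drop (f + 1))

/-- `ddist`: the minimum length of a departing `s`–`t` path avoiding `P[f]`
(`∞` if none exists). -/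
noncomputable def ddist {V : Type} (G : WDigraph V) (P : List V) (f : ℕ)
    (s t : V) : ℝ≥0∞ :=
  ⨅ (R : List V) (_ : IsDeparting G P f s t R), ENNReal.ofReal (G.len R)

/-- `jdist`: the minimum length of a jumping `s`–`t` path avoiding `P[f]`
(`∞` if none exists). -/
noncomputable def jdist {V : Type} (G : WDigraph V) (P : List V) (f : ℕ)
    (s t : V) : ℝ≥0∞ :=
  ⨅ (R : List V) (_ : IsJumping G P f s t R), ENNReal.ofReal (G.len R)


section AuxLemmas

variable {V : Type}

private lemma len_nil_aux (G : WDigraph V) : G.len ([] : List V) = 0 := by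
  simp [WDigraph.len]

private lemma len_singleton_aux (G : WDigraph V) (a : V) : G.len [a] = 0 := by
  simp [WDigraph.len]

private lemma len_cons_cons_aux (G : WDigraph V) (a b : V) (l : List V) :
    G.len (a :: b :: l) = G.w a b + G.len (b :: l) := by
  simp [WDigraph.len]

private lemma len_nonneg_aux (G : WDigraph V) (hw : G.PosWeights) :
    ∀ l : List V, l.Chain' G.Adj → 0 ≤ G.len l
  | [], _ => by rw [len_nil_aux]
  | [a], _ => by rw [len_singleton_aux]
  | a :: b :: l, h => by
    unfold List.Chain' at h
    rw [List.isChain_cons_cons] at h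
    rw [len_cons_cons_aux]
    exact add_nonneg (le_of_lt (hw a b h.1)) (len_nonneg_aux G hw (b :: l) h.2)

private lemma len_append_last_aux (G : WDigraph V) :
    ∀ (A B : List V) (c : V), A.getLast? = some c →
      G.len (A ++ B) = G.len A + G.len (c :: B)
  | [], _, _, h => by simp at h
  | [x], B, c, h => by
    simp only [List.getLast?_singleton, Option.some.injEq] at h
    subst h
    simp only [List.singleton_append, len_singleton_aux, zero_add]
  | x :: y :: A, B, c, h => by
    rw [List.getLast?_cons_cons] at h
    have ih := len_append_last_aux G (y :: A) B c h
    have e1 : (x :: y :: A) ++ B = x :: ((y :: A) ++ B) := rfl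
    have e2 : (y :: A) ++ B = y :: (A ++ B) := rfl
    rw [e1, e2, len_cons_cons_aux, ← e2, ih, len_cons_cons_aux]
    ring

private lemma exists_good_path_aux (G : WDigraph V) (hw : G.PosWeights) (s : V) (P : List V)
    (hchain : P.Chain' G.Adj) (hnodup : P.Nodup) (hhead : P.head? = some s)
    (hshort : ShortestPrefixes G s P)
    (f : ℕ) (hf1 : 1 ≤ f) (hf2 : f < P.length)
    (t : V) (R : List V)
    (hR : (G.deleteVert (P.getD f s)).IsPathFrom s t R) :
    ∃ R', (G.deleteVert (P.getD f s)).IsPathFrom s t R' ∧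
      (∃ k, (∀ a ∈ R'.take k, a ∈ P.take f) ∧ (∀ a ∈ R'.drop k, a ∉ P.take f)) ∧
      G.len R' ≤ G.len R := by
  classical
  obtain ⟨hRchain, hRnodup, hRhead, hRlast⟩ := hR
  have hPlen0 : 0 < P.length := lt_of_le_of_lt (Nat.zero_le f) hf2
  have hP0 : P[0]? = some s := by rw [← List.head?_eq_getElem?]; exact hhead
  obtain ⟨h0P, hP0e⟩ := List.getElem?_eq_some_iff.mp hP0
  have hRne : R ≠ [] := by rintro rfl; simp at hRhead
  have hRlen0 : 0 < R.length := List.length_pos_iff.mpr hRne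
  have hR0 : R[0]? = some s := by rw [← List.head?_eq_getElem?]; exact hRhead
  obtain ⟨h0R, hR0e⟩ := List.getElem?_eq_some_iff.mp hR0
  -- s lies on P.take f
  have hsS : s ∈ P.take f := by
    have h0 : 0 < (P.take f).length := by
      rw [List.length_take]; exact lt_min (lt_of_lt_of_le Nat.zero_lt_one hf1) hPlen0
    have he : (P.take f)[0] = s := by rw [List.getElem_take]; exact hP0e
    rw [← he]; exact List.getElem_mem h0
  -- the last index j of R whose vertex lies on P.take f
  set T : Finset ℕ := (Finset.range R.length).filter (fun m => R.getD m s ∈ P.take f) with hT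
  have h0T : 0 ∈ T := by
    rw [hT, Finset.mem_filter, Finset.mem_range]
    exact ⟨hRlen0, by rw [List.getD_eq_getElem _ _ h0R, hR0e]; exact hsS⟩
  set j : ℕ := T.max' ⟨0, h0T⟩ with hj
  have hjT : j ∈ T := T.max'_mem _
  rw [hT, Finset.mem_filter, Finset.mem_range] at hjT
  obtain ⟨hjn, hjS⟩ := hjT
  have hafter : ∀ m, j < m → m < R.length → R.getD m s ∉ P.take f := by
    intro m h1 h2 hmem
    have hmT : m ∈ T := by rw [hT, Finset.mem_filter, Finset.mem_range]; exact ⟨h2, hmem⟩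
    exact absurd (Finset.le_max' T m hmT) (not_le.mpr h1)
  -- the index i of that vertex on P
  obtain ⟨i, hiS, hSi⟩ := List.mem_iff_getElem.mp hjS
  have hif : i < f := lt_of_lt_of_le hiS (by rw [List.length_take]; exact min_le_left _ _)
  have hiP : i < P.length := lt_trans hif hf2
  have hPi : P[i] = R.getD j s := by rw [← hSi, List.getElem_take]
  have hAlen : (P.take (i + 1)).length = i + 1 := by
    rw [List.length_take]; exact min_eq_left (Nat.succ_le_of_lt hiP)
  have hAlast : (P.take (i + 1)).getLast? = some P[i] := by
    rw [List.take_succ, List.getElem?_eq_getElem hiP]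
    exact List.getLast?_concat
  have hAsub : ∀ a ∈ P.take (i + 1), a ∈ P.take f := by
    intro a ha
    have hAe : P.take (i + 1) = (P.take f).take (i + 1) := by
      rw [List.take_take, min_eq_left (Nat.succ_le_of_lt hif)]
    rw [hAe] at ha
    exact List.take_subset _ _ ha
  have hBnot : ∀ a ∈ R.drop (j + 1), a ∉ P.take f := by
    intro a ha
    obtain ⟨m, hm, hma⟩ := List.mem_iff_getElem.mp ha
    have hmlen : j + 1 + m < R.length := by
      rw [List.length_drop] at hm; omega
    have hgd : R.getD (j + 1 + m) s = a := by
      rw [List.getD_eq_getElem _ _ hmlen, ← hma, List.getElem_drop]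
    rw [← hgd]
    exact hafter _ (by omega) hmlen
  -- vertices of P.take f are different from the failed vertex
  have hdisj : List.Disjoint (P.take f) (P.drop f) := by
    have hnd := hnodup
    rw [← List.take_append_drop f P, List.nodup_append] at hnd
    exact fun a ha hb => hnd.2.2 a ha a hb rfl
  have hvf_mem : P.getD f s ∈ P.drop f := by
    have hf' : 0 < (P.drop f).length := by rw [List.length_drop]; omega
    have he : (P.drop f)[0] = P.getD f s := by
      rw [List.getElem_drop, List.getD_eq_getElem _ _ hf2]
      simp
    rw [← he]; exact List.getElem_mem hf'
  have hSne : ∀ a ∈ P.take f, a ≠ P.getD f s := fun a ha he => hdisj ha (he ▸ hvf_mem)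
  -- chains
  have hchainA_G : List.Chain' G.Adj (P.take (i + 1)) := by
    have h := hchain
    rw [← List.take_append_drop (i + 1) P] at h
    exact h.left_of_append
  have hchainA : List.Chain' (G.deleteVert (P.getD f s)).Adj (P.take (i + 1)) := by
    unfold List.Chain' at hchainA_G ⊢
    rw [List.isChain_iff_getElem] at hchainA_G ⊢
    intro a ha
    exact ⟨hchainA_G a ha, hSne _ (hAsub _ (List.getElem_mem _)),
      hSne _ (hAsub _ (List.getElem_mem _))⟩
  have hchainB : List.Chain' (G.deleteVert (P.getD f s)).Adj (R.drop (j + 1)) := by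
    have h := hRchain
    rw [← List.take_append_drop (j + 1) R] at h
    exact h.right_of_append
  have hchainR' : List.Chain' (G.deleteVert (P.getD f s)).Adj
      (P.take (i + 1) ++ R.drop (j + 1)) := by
    unfold List.Chain'
    rw [List.isChain_append]
    refine ⟨hchainA, hchainB, ?_⟩
    intro x hx y hy
    rw [hAlast, Option.mem_some_iff] at hx
    subst hx
    rw [List.head?_drop, Option.mem_def] at hy
    obtain ⟨hy1, hy2⟩ := List.getElem?_eq_some_iff.mp hy
    subst hy2
    have hj1 : j < R.length - 1 := by omega
    have hc := (List.isChain_iff_getElem.mp hRchain) j (by omega)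
    rw [hPi, List.getD_eq_getElem _ _ hjn]
    simpa [List.get_eq_getElem] using hc
  -- nodup
  have hnodupR' : (P.take (i + 1) ++ R.drop (j + 1)).Nodup := by
    rw [List.nodup_append]
    refine ⟨List.Nodup.sublist (List.take_sublist _ _) hnodup,
      List.Nodup.sublist (List.drop_sublist _ _) hRnodup, ?_⟩
    intro a ha b hb hab
    subst hab
    exact hBnot a hb (hAsub a ha)
  -- head
  have hheadA : (P.take (i + 1)).head? = some s := by
    rw [List.head?_eq_getElem?]
    have h0A : 0 < (P.take (i + 1)).length := by
      rw [List.length_take]; exact lt_min (Nat.succ_pos i) hPlen0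
    rw [List.getElem?_eq_getElem h0A, List.getElem_take]
    exact congrArg some hP0e
  have hheadR' : (P.take (i + 1) ++ R.drop (j + 1)).head? = some s := by
    rw [List.head?_append, hheadA]; rfl
  -- last
  have hlastR' : (P.take (i + 1) ++ R.drop (j + 1)).getLast? = some t := by
    rcases eq_or_ne (R.drop (j + 1)) [] with hBe | hBe
    · have hjlast : j = R.length - 1 := by
        have hl := congrArg List.length hBe
        rw [List.length_drop] at hl
        simp only [List.length_nil] at hl
        omega
      have ht' : R.getD j s = t := by
        have h2 := hRlast
        rw [List.getLast?_eq_getElem?,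
          List.getElem?_eq_getElem (by omega : R.length - 1 < R.length)] at h2
        rw [List.getD_eq_getElem _ _ hjn]
        have hje : R[j] = R[R.length - 1] := by congr 1
        rw [hje]
        exact Option.some.inj h2
      rw [hBe, List.append_nil, hAlast, hPi, ht']
    · rw [List.getLast?_append]
      have h1 : (R.drop (j + 1)).getLast? = some t := by
        have h2 := hRlast
        rw [← List.take_append_drop (j + 1) R, List.getLast?_append] at h2
        obtain ⟨c, hc⟩ := Option.ne_none_iff_exists'.mp
          (mt List.getLast?_eq_none_iff.mp hBe)
        rw [hc] at h2 ⊢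
        simpa using h2
      rw [h1]; rfl
  have hR'path : (G.deleteVert (P.getD f s)).IsPathFrom s t
      (P.take (i + 1) ++ R.drop (j + 1)) := ⟨hchainR', hnodupR', hheadR', hlastR'⟩
  -- condition (C1)
  have hC1 : ∃ k, (∀ a ∈ (P.take (i + 1) ++ R.drop (j + 1)).take k, a ∈ P.take f) ∧
      (∀ a ∈ (P.take (i + 1) ++ R.drop (j + 1)).drop k, a ∉ P.take f) := by
    refine ⟨i + 1, ?_, ?_⟩
    · rw [List.take_left' hAlen]; exact hAsub
    · rw [List.drop_left' hAlen]; exact hBnot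
  -- length comparison via the shortest-prefix property
  have hQlast : (R.take (j + 1)).getLast? = some (R.getD j s) := by
    rw [List.take_succ, List.getElem?_eq_getElem hjn, List.getD_eq_getElem _ _ hjn]
    exact List.getLast?_concat
  have hchainQ : List.Chain' (G.deleteVert (P.getD f s)).Adj (R.take (j + 1)) := by
    have h := hRchain
    rw [← List.take_append_drop (j + 1) R] at h
    exact h.left_of_append
  have hchainQ_G : List.Chain' G.Adj (R.take (j + 1)) :=
    hchainQ.imp fun a b hab => hab.1
  have hQpath : G.IsPathFrom s (P.getD i s) (R.take (j + 1)) := by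
    refine ⟨hchainQ_G, List.Nodup.sublist (List.take_sublist _ _) hRnodup, ?_, ?_⟩
    · rw [List.head?_eq_getElem?]
      have h0Q : 0 < (R.take (j + 1)).length := by
        rw [List.length_take]; exact lt_min (Nat.succ_pos j) hRlen0
      rw [List.getElem?_eq_getElem h0Q, List.getElem_take]
      exact congrArg some hR0e
    · rw [hQlast, List.getD_eq_getElem _ _ hiP, hPi]
  have hdistle : G.dist s (P.getD i s) ≤ ENNReal.ofReal (G.len (R.take (j + 1))) :=
    iInf₂_le _ hQpath
  have hQnonneg : 0 ≤ G.len (R.take (j + 1)) := len_nonneg_aux G hw _ hchainQ_G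
  have hAQ : G.len (P.take (i + 1)) ≤ G.len (R.take (j + 1)) := by
    have h2 : ENNReal.ofReal (G.len (P.take (i + 1))) ≤
        ENNReal.ofReal (G.len (R.take (j + 1))) := by
      rw [hshort i hiP]; exact hdistle
    exact (ENNReal.ofReal_le_ofReal_iff hQnonneg).mp h2
  have hlenR' : G.len (P.take (i + 1) ++ R.drop (j + 1)) =
      G.len (P.take (i + 1)) + G.len (R.getD j s :: R.drop (j + 1)) := by
    rw [len_append_last_aux G _ _ _ hAlast, hPi]
  have hlenR : G.len R = G.len (R.take (j + 1)) + G.len (R.getD j s :: R.drop (j + 1)) := by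
    conv_lhs => rw [← List.take_append_drop (j + 1) R]
    exact len_append_last_aux G _ _ _ hQlast
  refine ⟨_, hR'path, hC1, ?_⟩
  rw [hlenR', hlenR]
  exact add_le_add hAQ le_rfl

end AuxLemmas

/-- **Decomposition of replacement distances.** For every failed vertex
`v_f = P[f] ∈ V(P) \ {s}` and destination `t ≠ v_f`,
`dist_{G−v_f}(s,t) = min(ddist_{G−v_f}(s,t), jdist_{G−v_f}(s,t))`.
Here `P` is a path of `G` starting at `s` all of whose prefixes are shortest paths,
and the edge weights of `G` are positive. -/
theorem dist_eq_min_ddist_jdist {V : Type} [Fintype V] (G : WDigraph V)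
    (hw : G.PosWeights) (s : V) (P : List V)
    (hchain : P.Chain' G.Adj) (hnodup : P.Nodup) (hhead : P.head? = some s)
    (hshort : ShortestPrefixes G s P)
    (f : ℕ) (hf1 : 1 ≤ f) (hf2 : f < P.length)
    (t : V) (ht : t ≠ P.getD f s) :
    (G.deleteVert (P.getD f s)).dist s t =
      min (ddist G P f s t) (jdist G P f s t) := by
  classical
  apply le_antisymm
  · apply le_min
    · refine le_iInf₂ fun R hR => ?_
      exact iInf₂_le R hR.1
    · refine le_iInf₂ fun R hR => ?_
      exact iInf₂_le R hR.1
  · refine le_iInf₂ fun R hR => ?_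
    obtain ⟨R', hR'path, hC1, hlen⟩ :=
      exists_good_path_aux G hw s P hchain hnodup hhead hshort f hf1 hf2 t R hR
    by_cases hcase : ∃ a ∈ R'.dropLast, a ∈ P.drop (f + 1)
    · calc min (ddist G P f s t) (jdist G P f s t) ≤ jdist G P f s t := min_le_right _ _
        _ ≤ ENNReal.ofReal (G.len R') := iInf₂_le R' ⟨hR'path, hC1, hcase⟩
        _ ≤ ENNReal.ofReal ((G.deleteVert (P.getD f s)).len R) :=
            ENNReal.ofReal_le_ofReal hlen
    · push_neg at hcase
      calc min (ddist G P f s t) (jdist G P f s t) ≤ ddist G P f s t := min_le_left _ _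
        _ ≤ ENNReal.ofReal (G.len R') := iInf₂_le R' ⟨hR'path, hC1, hcase⟩
        _ ≤ ENNReal.ofReal ((G.deleteVert (P.getD f s)).len R) :=
            ENNReal.ofReal_le_ofReal hlen
end

section
/- Let t ∈ V(T₂) \ {z} and v_f ∈ V(P_T) \ {s}. If ddist_{G−v_f}(s,t) ≥ jdist_{G−v_f}(s,t), then jdist_{G−v_f}(s,t) = dist_{G−v_f}(s,z) + dist_T(z,t). -/
open scoped ENNReal

/-- `T` is a shortest path tree of `G` rooted at `s`, encoded by its vertex set `VT`
and the function `tp` assigning to each vertex of `T` the tree path from `s` to it: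
`T` spans exactly the vertices reachable from `s`, each tree path is a path of `G` of
length `dist_G(s, ·)`, and tree paths are prefix-consistent (for every `u` on the tree
path to `v`, the tree path to `u` is a prefix of the tree path to `v`). -/
structure IsSPT {V : Type} (G : WDigraph V) (s : V) (VT : Set V)
    (tp : V → List V) : Prop where
  root_mem : s ∈ VT
  root_path : tp s = [s]
  path : ∀ v ∈ VT, G.IsPathFrom s v (tp v)
  shortest : ∀ v ∈ VT, ENNReal.ofReal (G.len (tp v)) = G.dist s v
  closed : ∀ v ∈ VT, ∀ u ∈ tp v, u ∈ VT ∧ tp u <+: tp v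
  spans : ∀ v, G.dist s v ≠ ⊤ → v ∈ VT

namespace JHelp
open WDigraph List
variable {V : Type}

lemma len_nil (G : WDigraph V) : G.len ([] : List V) = 0 := rfl
lemma len_single (G : WDigraph V) (a : V) : G.len [a] = 0 := rfl
lemma len_cons_cons (G : WDigraph V) (a b : V) (l : List V) :
    G.len (a :: b :: l) = G.w a b + G.len (b :: l) := rfl

lemma len_append_cons (G : WDigraph V) (A : List V) (x : V) (B : List V) :
    G.len (A ++ x :: B) = G.len (A ++ [x]) + G.len (x :: B) := by
  induction A with
  | nil => simp [len_single, len_nil]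
  | cons a A ih =>
    cases A with
    | nil => simp [len_cons_cons, len_single]
    | cons c A' =>
      simp only [List.cons_append, len_cons_cons] at *
      rw [ih]; ring

lemma len_nonneg {G : WDigraph V} (hw : ∀ a b, G.Adj a b → 0 ≤ G.w a b) :
    ∀ {l : List V}, l.Chain' G.Adj → 0 ≤ G.len l := by
  intro l
  induction l with
  | nil => intro _; simp [len_nil]
  | cons a l ih =>
    intro h
    cases l with
    | nil => simp [len_single]
    | cons b l' =>
      unfold List.Chain' at h
      rw [List.isChain_cons_cons] at h
      rw [len_cons_cons]
      have := hw _ _ h.1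
      have := ih h.2
      linarith

lemma dist_le_len {G : WDigraph V} {u v : V} {l : List V} (h : G.IsPathFrom u v l) :
    G.dist u v ≤ ENNReal.ofReal (G.len l) := by
  rw [WDigraph.dist]
  exact iInf₂_le l h

lemma exists_split_last {S : Set V} (l : List V) (h : ∃ a ∈ l, a ∈ S) :
    ∃ A x B, l = A ++ x :: B ∧ x ∈ S ∧ ∀ b ∈ B, b ∉ S := by
  induction l with
  | nil => simp at h
  | cons a t ih =>
    by_cases ht : ∃ a ∈ t, a ∈ S
    · obtain ⟨A, x, B, rfl, hx, hB⟩ := ih ht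
      exact ⟨a :: A, x, B, rfl, hx, hB⟩
    · obtain ⟨c, hc, hcS⟩ := h
      rcases List.mem_cons.1 hc with rfl | hct
      · exact ⟨[], c, t, rfl, hcS, fun b hb hbS => ht ⟨b, hb, hbS⟩⟩
      · exact absurd ⟨c, hct, hcS⟩ ht

lemma exists_split_first {S : Set V} (l : List V) (h : ∃ a ∈ l, a ∈ S) :
    ∃ A x B, l = A ++ x :: B ∧ x ∈ S ∧ ∀ b ∈ A, b ∉ S := by
  induction l with
  | nil => simp at h
  | cons a t ih =>
    by_cases ha : a ∈ S
    · exact ⟨[], a, t, rfl, ha, by simp⟩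
    · have ht : ∃ x ∈ t, x ∈ S := by
        obtain ⟨c, hc, hcS⟩ := h
        rcases List.mem_cons.1 hc with rfl | hct
        · exact absurd hcS ha
        · exact ⟨c, hct, hcS⟩
      obtain ⟨A, x, B, rfl, hx, hA⟩ := ih ht
      refine ⟨a :: A, x, B, rfl, hx, ?_⟩
      intro b hb
      rcases List.mem_cons.1 hb with rfl | hbA
      · exact ha
      · exact hA b hbA

lemma not_nodup_decomp : ∀ (l : List V), ¬ l.Nodup →
    ∃ (x : V) (A B C : List V), l = A ++ x :: (B ++ x :: C) := by
  intro l
  induction l with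
  | nil => intro h; exact absurd List.nodup_nil h
  | cons a t ih =>
    intro h
    by_cases hat : a ∈ t
    · obtain ⟨B, C, rfl⟩ := List.append_of_mem hat
      exact ⟨a, [], B, C, rfl⟩
    · have : ¬ t.Nodup := fun hn => h (List.nodup_cons.2 ⟨hat, hn⟩)
      obtain ⟨x, A, B, C, rfl⟩ := ih this
      exact ⟨x, a :: A, B, C, rfl⟩

lemma chain'_deleteVert {G : WDigraph V} {x : V} : ∀ {l : List V},
    l.Chain' G.Adj → (∀ a ∈ l, a ≠ x) → l.Chain' (G.deleteVert x).Adj := by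
  intro l
  induction l with
  | nil => intro _ _; exact List.isChain_nil
  | cons a t ih =>
    intro hc hne
    unfold List.Chain' at hc ⊢
    rw [List.isChain_cons] at hc ⊢
    refine ⟨fun y hy => ⟨hc.1 y hy, hne a (by simp), hne y (List.mem_cons_of_mem _ (List.mem_of_mem_head? hy))⟩,
      ih hc.2 fun b hb => hne b (List.mem_cons_of_mem _ hb)⟩

lemma chain'_of_deleteVert {G : WDigraph V} {x : V} {l : List V}
    (h : l.Chain' (G.deleteVert x).Adj) : l.Chain' G.Adj :=
  h.imp fun _ _ hab => hab.1

lemma head?_append_left {l r : List V} (h : l ≠ []) : (l ++ r).head? = l.head? := by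
  cases l with
  | nil => exact absurd rfl h
  | cons a t => rfl

lemma dist_le_walk {G : WDigraph V} (hw : ∀ a b, G.Adj a b → 0 ≤ G.w a b)
    {u v : V} : ∀ (n : ℕ) (l : List V), l.length ≤ n → l.Chain' G.Adj →
    l.head? = some u → l.getLast? = some v →
    G.dist u v ≤ ENNReal.ofReal (G.len l) := by
  intro n
  induction n with
  | zero =>
    intro l hlen hc hh hl
    rw [Nat.le_zero, List.length_eq_zero_iff] at hlen
    subst hlen; simp at hh
  | succ n ih =>
    intro l hlen hc hh hl
    by_cases hnd : l.Nodup
    · exact dist_le_len ⟨hc, hnd, hh, hl⟩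
    · obtain ⟨x, A, B, C, rfl⟩ := not_nodup_decomp l hnd
      have hform : A ++ x :: (B ++ x :: C) = (A ++ [x]) ++ ((B ++ [x]) ++ C) := by simp
      have hAx : (A ++ [x]).Chain' G.Adj := hc.infix ⟨[], (B ++ x :: C), by simp⟩
      have hxBx : (x :: (B ++ [x])).Chain' G.Adj := hc.infix ⟨A, C, by simp⟩
      have hCa : C.Chain' G.Adj := hc.infix ⟨A ++ x :: B ++ [x], [], by simp⟩
      -- junction between (B ++ [x]) and C inside original chain
      have hcc := hform ▸ hc
      unfold List.Chain' at hcc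
      rw [List.isChain_append] at hcc
      have hjc := hcc.2
      rw [List.isChain_append] at hjc
      have hlink : ∀ y ∈ C.head?, G.Adj x y := by
        intro y hy
        exact hjc.1.2.2 x (by rw [List.getLast?_append_of_ne_nil _ (by simp : [x] ≠ ([] : List V))]; rfl) y hy
      have hchain' : ((A ++ [x]) ++ C).Chain' G.Adj := by
        unfold List.Chain'
        rw [List.isChain_append]
        exact ⟨hAx, hCa, fun a ha y hy => by
          rw [List.getLast?_append_of_ne_nil _ (by simp : [x] ≠ ([] : List V))] at ha
          simp at ha; subst ha; exact hlink y hy⟩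
      have hh' : ((A ++ [x]) ++ C).head? = some u := by
        cases A with
        | nil =>
          simp only [List.nil_append] at hh ⊢
          simpa using hh
        | cons a t =>
          rw [head?_append_left (by simp)] at hh ⊢
          simpa using hh
      have hl' : ((A ++ [x]) ++ C).getLast? = some v := by
        cases C with
        | nil =>
          simp only [List.append_nil]
          rw [show A ++ x :: (B ++ x :: []) = (A ++ x :: B) ++ [x] by simp] at hl
          rw [List.getLast?_append_of_ne_nil _ (by simp)] at hl
          rw [List.getLast?_append_of_ne_nil _ (by simp : [x] ≠ ([] : List V))]
          simpa using hl
        | cons c t =>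
          rw [List.getLast?_append_of_ne_nil _ (by simp : c :: t ≠ [])]
          rw [show A ++ x :: (B ++ x :: c :: t) = (A ++ x :: B ++ [x]) ++ (c :: t) by simp] at hl
          rw [List.getLast?_append_of_ne_nil _ (by simp : c :: t ≠ [])] at hl
          exact hl
      have hlenle : ((A ++ [x]) ++ C).length ≤ n := by
        have e1 : ((A ++ [x]) ++ C).length = A.length + 1 + C.length := by simp; omega
        have e2 : (A ++ x :: (B ++ x :: C)).length = A.length + (B.length + C.length + 2) := by
          simp; omega
        rw [e2] at hlen
        omega
      have hle := ih ((A ++ [x]) ++ C) hlenle hchain' hh' hl'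
      refine hle.trans (ENNReal.ofReal_le_ofReal ?_)
      have e1 : G.len (A ++ x :: (B ++ x :: C)) =
          G.len (A ++ [x]) + (G.len ((x :: B) ++ [x]) + G.len (x :: C)) := by
        rw [len_append_cons]
        congr 1
        rw [show (x :: (B ++ x :: C)) = ((x :: B) ++ x :: C) by simp]
        rw [len_append_cons]
      have e2 : G.len ((A ++ [x]) ++ C) = G.len (A ++ [x]) + G.len (x :: C) := by
        rw [show (A ++ [x]) ++ C = A ++ x :: C by simp, len_append_cons]
      have hnn : 0 ≤ G.len ((x :: B) ++ [x]) :=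
        len_nonneg hw (hxBx.infix ⟨[], [], by simp⟩)
      rw [e1, e2]
      linarith

/-- Glue two paths sharing an endpoint into a walk; bounds distance. -/
lemma dist_le_glue {G : WDigraph V} (hw : ∀ a b, G.Adj a b → 0 ≤ G.w a b)
    {a b c : V} {l1 l2 : List V}
    (c1 : l1.Chain' G.Adj) (c2 : l2.Chain' G.Adj)
    (h1a : l1.head? = some a) (h1b : l1.getLast? = some b)
    (h2b : l2.head? = some b) (h2c : l2.getLast? = some c) :
    G.dist a c ≤ ENNReal.ofReal (G.len l1 + G.len l2) := by
  have h2ne : l2 ≠ [] := by rintro rfl; simp at h2b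
  obtain ⟨t, rfl⟩ : ∃ t, l2 = b :: t := by
    cases l2 with
    | nil => exact absurd rfl h2ne
    | cons hd t => exact ⟨t, by simp at h2b; rw [h2b]⟩
  · have h1ne : l1 ≠ [] := by rintro rfl; simp at h1a
    obtain ⟨A, hA⟩ : ∃ A, l1 = A ++ [b] := by
      refine ⟨l1.dropLast, ?_⟩
      have := List.dropLast_append_getLast h1ne
      have hlast : l1.getLast h1ne = b := by
        rw [List.getLast?_eq_getLast h1ne] at h1b
        simpa using h1b
      rw [← hlast]; exact this.symm
    subst hA
    have hchain : (A ++ b :: t).Chain' G.Adj := by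
      rw [show A ++ b :: t = (A ++ [b]) ++ t by simp]
      unfold List.Chain'
      rw [List.isChain_append]
      refine ⟨c1, c2.tail, fun x hx y hy => ?_⟩
      rw [List.getLast?_append_of_ne_nil _ (by simp : [b] ≠ ([] : List V))] at hx
      simp at hx; subst hx
      exact (List.isChain_cons.1 c2).1 y hy
    have hh : (A ++ b :: t).head? = some a := by
      cases A with
      | nil => simp only [List.nil_append]
               have : b = a := by simpa using h1a
               simp [this]
      | cons a' A' =>
        rw [head?_append_left (by simp)] at h1a ⊢; exact h1a
    have hl : (A ++ b :: t).getLast? = some c := by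
      cases t with
      | nil =>
        have : c = b := by have := h2c; simp at this; exact this.symm
        subst this
        rw [List.getLast?_append_of_ne_nil _ (by simp : [c] ≠ ([] : List V))]; rfl
      | cons c' t' =>
        rw [show A ++ b :: c' :: t' = (A ++ [b]) ++ (c' :: t') by simp,
          List.getLast?_append_of_ne_nil _ (by simp : c' :: t' ≠ [])]
        rw [show (b :: c' :: t') = [b] ++ (c' :: t') by simp,
          List.getLast?_append_of_ne_nil _ (by simp : c' :: t' ≠ [])] at h2c
        exact h2c
    have hlen : G.len (A ++ b :: t) = G.len (A ++ [b]) + G.len (b :: t) :=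
      len_append_cons G A b t
    rw [← hlen]
    exact dist_le_walk hw (A ++ b :: t).length _ le_rfl hchain hh hl

lemma dist_triangle {G : WDigraph V} (hw : ∀ a b, G.Adj a b → 0 ≤ G.w a b)
    (a b c : V) : G.dist a c ≤ G.dist a b + G.dist b c := by
  rw [show G.dist a b = ⨅ (l : List V) (_ : G.IsPathFrom a b l), ENNReal.ofReal (G.len l) from rfl,
    show G.dist b c = ⨅ (l : List V) (_ : G.IsPathFrom b c l), ENNReal.ofReal (G.len l) from rfl]
  simp only [ENNReal.iInf_add, ENNReal.add_iInf]
  refine le_iInf fun l2 => le_iInf fun h2 => le_iInf fun l1 => le_iInf fun h1 => ?_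
  obtain ⟨c1, _, h1a, h1b⟩ := h1
  obtain ⟨c2, _, h2b, h2c⟩ := h2
  refine (dist_le_glue hw c1 c2 h1a h1b h2b h2c).trans ?_
  rw [ENNReal.ofReal_add (len_nonneg hw c1) (len_nonneg hw c2), add_comm]

lemma mem_take_iff {l : List V} {k : ℕ} {a : V} :
    a ∈ l.take k ↔ ∃ i, ∃ _ : i < l.length, i < k ∧ l[i] = a := by
  constructor
  · intro h
    obtain ⟨i, hi, he⟩ := List.mem_iff_getElem.1 h
    rw [List.length_take, lt_min_iff] at hi
    exact ⟨i, hi.2, hi.1, by rw [List.getElem_take] at he; exact he⟩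
  · rintro ⟨i, h, hik, rfl⟩
    exact List.mem_iff_getElem.2 ⟨i, by rw [List.length_take]; omega,
      List.getElem_take⟩

lemma mem_drop_iff {l : List V} {k : ℕ} {a : V} :
    a ∈ l.drop k ↔ ∃ i, ∃ _ : i < l.length, k ≤ i ∧ l[i] = a := by
  constructor
  · intro h
    obtain ⟨i, hi, he⟩ := List.mem_iff_getElem.1 h
    rw [List.length_drop] at hi
    refine ⟨k + i, by omega, by omega, ?_⟩
    rw [List.getElem_drop] at he; exact he
  · rintro ⟨i, h, hik, rfl⟩
    refine List.mem_iff_getElem.2 ⟨i - k, by rw [List.length_drop]; omega, ?_⟩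
    rw [List.getElem_drop]
    congr 1; omega

lemma getLast?_decomp {l : List V} {z : V} (h : l.getLast? = some z) :
    l = l.dropLast ++ [z] := by
  have hne : l ≠ [] := by rintro rfl; simp at h
  have := List.dropLast_append_getLast hne
  rw [List.getLast?_eq_getLast hne] at h
  simp only [Option.some_inj] at h
  rw [← h]; exact this.symm

lemma head?_decomp {l : List V} {a : V} (h : l.head? = some a) :
    l = a :: l.tail := by
  cases l with
  | nil => simp at h
  | cons b t => simp only [List.head?_cons, Option.some_inj] at h; rw [h]; rfl

lemma head?_eq_getElem {l : List V} (h : l ≠ []) :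
    l.head? = some (l[0]'(List.length_pos_iff.2 h)) := by
  cases l with
  | nil => exact absurd rfl h
  | cons b t => rfl

end JHelp


section Directions
open JHelp WDigraph List

variable {V : Type}

lemma ge_dir (G : WDigraph V) (hw : G.PosWeights) (s z t : V) (P rest : List V)
    (hP : G.IsPathFrom s z P) (hQt : G.IsPathFrom s t (P ++ rest))
    (hshort : ShortestPrefixes G s P)
    (hst : ENNReal.ofReal (G.len (P ++ rest)) = G.dist s t)
    (f : ℕ) (hf2 : f + 1 < P.length) :
    (G.deleteVert (P.getD f s)).dist s z + ENNReal.ofReal (G.len (z :: rest)) ≤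
      jdist G P f s t := by
  classical
  obtain ⟨hPc, hPn, hPh, hPl⟩ := hP
  obtain ⟨hQc, hQn, hQh, hQl⟩ := hQt
  set p := P.length with hp
  have hPne : P ≠ [] := by rintro h; rw [h] at hPh; simp at hPh
  have hp0 : 0 < p := List.length_pos_iff.2 hPne
  have hs0 : P[0]'hp0 = s := by
    rw [head?_eq_getElem hPne] at hPh; simpa using hPh
  have hzl : P[p-1]'(by omega) = z := by
    rw [List.getLast?_eq_getLast hPne, List.getLast_eq_getElem] at hPl
    simpa using hPl
  have hfp : f < p := by omega
  have hv : P.getD f s = P[f]'hfp := List.getD_eq_getElem P s hfp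
  set v := P.getD f s with hvdef
  set G' := G.deleteVert v with hG'
  have hw' : ∀ a b, G'.Adj a b → 0 ≤ G'.w a b := fun a b h => (hw a b h.1).le
  have hwG : ∀ a b, G.Adj a b → 0 ≤ G.w a b := fun a b h => (hw a b h).le
  have hlen' : ∀ l : List V, G'.len l = G.len l := fun _ => rfl
  -- the tree path z :: rest and its facts
  have hPz : P = P.dropLast ++ [z] := getLast?_decomp hPl
  have hQform : P ++ rest = P.dropLast ++ (z :: rest) := by
    conv_lhs => rw [hPz]
    simp
  have hDchain : (z :: rest).Chain' G.Adj :=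
    hQc.infix ⟨P.dropLast, [], by rw [← hQform]; simp⟩
  have hDlast : (z :: rest).getLast? = some t := by
    rw [hQform, List.getLast?_append_of_ne_nil _ (by simp)] at hQl
    exact hQl
  -- unfold jdist
  rw [jdist]
  refine le_iInf fun R => le_iInf fun hR => ?_
  obtain ⟨⟨hRc, hRn, hRh, hRl⟩, -, u, huR, huP⟩ := hR
  have hRne : R ≠ [] := by rintro h; rw [h] at hRh; simp at hRh
  -- split R at u
  have huR' : u ∈ R := List.dropLast_subset R huR
  obtain ⟨R1, R2', hsplit'⟩ := List.append_of_mem huR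
  have hRdec : R = R.dropLast ++ [R.getLast hRne] := (List.dropLast_append_getLast hRne).symm
  have hgl : R.getLast hRne = t := by
    rw [List.getLast?_eq_getLast hRne] at hRl; simpa using hRl
  set R2 : List V := R2' ++ [R.getLast hRne] with hR2
  have hsplit : R = R1 ++ u :: R2 := by
    conv_lhs => rw [hRdec, hsplit']
    simp [hR2]
  have hR2ne : R2 ≠ [] := by simp [hR2]
  -- index of u on P
  obtain ⟨j, hjp, hjf, hju⟩ := mem_drop_iff.1 huP
  have hjf' : f + 1 ≤ j := hjf
  -- u ≠ s, so R1 ≠ []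
  have hus : u ≠ s := by
    rw [← hju, ← hs0]
    intro h
    rw [hPn.getElem_inj_iff] at h
    omega
  have hR1ne : R1 ≠ [] := by
    rintro rfl
    rw [hsplit] at hRh
    simp at hRh
    exact hus hRh
  -- W = P.drop j, the tree path from u to z
  set W : List V := P.drop j with hW
  have hWne : W ≠ [] := by
    simp only [hW, ne_eq, List.drop_eq_nil_iff]
    omega
  have hWdec : W = u :: P.drop (j + 1) := by
    rw [hW, List.drop_eq_getElem_cons hjp, hju]
  have hWchainG : W.Chain' G.Adj := hPc.infix (List.drop_suffix _ _).isInfix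
  have hWnev : ∀ a ∈ W, a ≠ v := by
    intro a ha
    obtain ⟨i, hi, hji, rfl⟩ := mem_drop_iff.1 ha
    rw [hv, ne_eq, hPn.getElem_inj_iff]
    omega
  have hWchain : W.Chain' G'.Adj := chain'_deleteVert hWchainG hWnev
  have hWhead : W.head? = some u := by rw [hWdec]; rfl
  have hWlast : W.getLast? = some z := by
    have : P = P.take j ++ W := (List.take_append_drop j P).symm
    rw [this, List.getLast?_append_of_ne_nil _ hWne] at hPl
    exact hPl
  -- M = R1 ++ W : walk from s to z in G'
  have hRcG : R.Chain' G.Adj := chain'_of_deleteVert hRc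
  have hR1chain : R1.Chain' G'.Adj := hRc.infix ⟨[], u :: R2, by simp [hsplit]⟩
  have hR1u_chainG : (R1 ++ [u]).Chain' G.Adj :=
    hRcG.infix ⟨[], R2, by simp [hsplit]⟩
  have hjunction : ∀ x ∈ R1.getLast?, ∀ y ∈ (u :: R2).head?, G'.Adj x y := by
    have := hsplit ▸ hRc
    unfold List.Chain' at this
    rw [List.isChain_append] at this
    exact this.2.2
  have hMchain : (R1 ++ W).Chain' G'.Adj := by
    unfold List.Chain'
    rw [List.isChain_append]
    refine ⟨hR1chain, hWchain, fun x hx y hy => ?_⟩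
    refine hjunction x hx y ?_
    rw [hWdec] at hy
    simpa using hy
  have hMhead : (R1 ++ W).head? = some s := by
    rw [head?_append_left hR1ne]
    rw [hsplit, head?_append_left hR1ne] at hRh
    exact hRh
  have hMlast : (R1 ++ W).getLast? = some z := by
    rw [List.getLast?_append_of_ne_nil _ hWne]; exact hWlast
  have hMlen : G.len (R1 ++ W) = G.len (R1 ++ [u]) + G.len W := by
    rw [hWdec, len_append_cons]
  -- Claim A
  have claimA : G'.dist s z ≤
      ENNReal.ofReal (G.len (R1 ++ [u])) + ENNReal.ofReal (G.len W) := by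
    have := dist_le_walk hw' (R1 ++ W).length (R1 ++ W) le_rfl hMchain hMhead hMlast
    rw [hlen', hMlen, ENNReal.ofReal_add (len_nonneg hwG hR1u_chainG)
      (len_nonneg hwG hWchainG)] at this
    exact this
  -- Claim B
  have hu2suffix : (u :: R2) <:+ R := ⟨R1, hsplit.symm⟩
  have hu2chainG : (u :: R2).Chain' G.Adj := hRcG.infix hu2suffix.isInfix
  have hu2last : (u :: R2).getLast? = some t := by
    rw [hsplit, List.getLast?_append_of_ne_nil _ (by simp)] at hRl
    simpa [hgl] using hRl
  have claimB : G.dist u t ≤ ENNReal.ofReal (G.len (u :: R2)) :=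
    dist_le_len ⟨hu2chainG, hRn.sublist hu2suffix.sublist, rfl, hu2last⟩
  -- Claim C
  have hshj := hshort j hjp
  rw [List.getD_eq_getElem P s hjp, hju] at hshj
  have hWzdec : W = W.dropLast ++ [z] := getLast?_decomp hWlast
  have lensplit : G.len (P ++ rest) =
      G.len (P.take (j + 1)) + (G.len W + G.len (z :: rest)) := by
    have e0 : P ++ rest = P.take j ++ u :: (P.drop (j + 1) ++ rest) := by
      conv_lhs => rw [← List.take_append_drop j P, List.drop_eq_getElem_cons hjp, hju]
      simp
    have e1 : P.take (j + 1) = P.take j ++ [u] := by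
      rw [List.take_succ]
      congr 1
      rw [List.getElem?_eq_getElem hjp, hju]
      rfl
    have e2 : (u :: (P.drop (j + 1) ++ rest)) = W ++ rest := by
      rw [hWdec]; simp
    have e3 : G.len (W ++ rest) = G.len W + G.len (z :: rest) := by
      conv_lhs => rw [hWzdec]
      rw [show W.dropLast ++ [z] ++ rest = W.dropLast ++ z :: rest by simp,
        len_append_cons, ← hWzdec]
    rw [e0, len_append_cons, ← e1, e2, e3]
  have hPj1chain : (P.take (j + 1)).Chain' G.Adj :=
    hPc.infix (List.take_prefix _ _).isInfix
  have claimC : ENNReal.ofReal (G.len W) + ENNReal.ofReal (G.len (z :: rest)) ≤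
      G.dist u t := by
    have htri := dist_triangle hwG s u t
    rw [← hst, lensplit] at htri
    rw [ENNReal.ofReal_add (len_nonneg hwG hPj1chain)
      (add_nonneg (len_nonneg hwG hWchainG) (len_nonneg hwG hDchain)),
      ENNReal.ofReal_add (len_nonneg hwG hWchainG) (len_nonneg hwG hDchain),
      ← hshj] at htri
    rwa [ENNReal.add_le_add_iff_left ENNReal.ofReal_ne_top] at htri
  -- combine
  have hlenR : G.len R = G.len (R1 ++ [u]) + G.len (u :: R2) := by
    rw [hsplit, len_append_cons]
  calc G'.dist s z + ENNReal.ofReal (G.len (z :: rest))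
      ≤ (ENNReal.ofReal (G.len (R1 ++ [u])) + ENNReal.ofReal (G.len W)) +
        ENNReal.ofReal (G.len (z :: rest)) := by
        exact add_le_add_left claimA _
    _ = ENNReal.ofReal (G.len (R1 ++ [u])) +
        (ENNReal.ofReal (G.len W) + ENNReal.ofReal (G.len (z :: rest))) := by
        rw [add_assoc]
    _ ≤ ENNReal.ofReal (G.len (R1 ++ [u])) + G.dist u t := by
        exact add_le_add_right claimC _
    _ ≤ ENNReal.ofReal (G.len (R1 ++ [u])) + ENNReal.ofReal (G.len (u :: R2)) := by
        exact add_le_add_right claimB _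
    _ = ENNReal.ofReal (G.len R) := by
        rw [hlenR, ENNReal.ofReal_add (len_nonneg hwG hR1u_chainG)
          (len_nonneg hwG hu2chainG)]


lemma le_dir (G : WDigraph V) (hw : G.PosWeights) (s z t : V) (P rest : List V)
    (hP : G.IsPathFrom s z P) (hQt : G.IsPathFrom s t (P ++ rest))
    (hshort : ShortestPrefixes G s P)
    (f : ℕ) (hf1 : 1 ≤ f) (hf2 : f + 1 < P.length)
    (hdd : jdist G P f s t ≤ ddist G P f s t) :
    jdist G P f s t ≤ (G.deleteVert (P.getD f s)).dist s z +
      ENNReal.ofReal (G.len (z :: rest)) := by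
  classical
  obtain ⟨hPc, hPn, hPh, hPl⟩ := hP
  obtain ⟨hQtc, hQtn, hQth, hQtl⟩ := hQt
  set p := P.length with hp
  have hPne : P ≠ [] := by rintro h; rw [h] at hPh; simp at hPh
  have hp0 : 0 < p := List.length_pos_iff.2 hPne
  have hs0 : P[0]'hp0 = s := by
    rw [head?_eq_getElem hPne] at hPh; simpa using hPh
  have hzl : P[p-1]'(by omega) = z := by
    rw [List.getLast?_eq_getLast hPne, List.getLast_eq_getElem] at hPl
    simpa using hPl
  have hfp : f < p := by omega
  have hv : P.getD f s = P[f]'hfp := List.getD_eq_getElem P s hfp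
  set v := P.getD f s with hvdef
  set G' := G.deleteVert v with hG'
  have hw' : ∀ a b, G'.Adj a b → 0 ≤ G'.w a b := fun a b h => (hw a b h.1).le
  have hwG : ∀ a b, G.Adj a b → 0 ≤ G.w a b := fun a b h => (hw a b h).le
  have hdisj : P.Disjoint rest := fun a ha hb => (List.nodup_append.1 hQtn).2.2 a ha a hb rfl
  have hPz : P = P.dropLast ++ [z] := getLast?_decomp hPl
  have hQform : P ++ rest = P.dropLast ++ (z :: rest) := by
    conv_lhs => rw [hPz]
    simp
  have hDchain : (z :: rest).Chain' G.Adj :=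
    hQtc.infix ⟨P.dropLast, [], by rw [← hQform]; simp⟩
  have hDlast : (z :: rest).getLast? = some t := by
    rw [hQform, List.getLast?_append_of_ne_nil _ (by simp)] at hQtl
    exact hQtl
  have hDnodup : (z :: rest).Nodup := by
    refine hQtn.sublist ?_
    rw [hQform]
    exact List.sublist_append_right _ _
  have hztf : z ∉ P.take f := by
    intro h
    obtain ⟨i', _, hif, he⟩ := mem_take_iff.1 h
    rw [← hzl, hPn.getElem_inj_iff] at he
    omega
  have hDnoP : ∀ a ∈ z :: rest, a ∉ P.take f := by
    intro a ha hmem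
    rcases List.mem_cons.1 ha with rfl | har
    · exact hztf hmem
    · exact hdisj (List.take_subset f P hmem) har
  have hDnev : ∀ a ∈ z :: rest, a ≠ v := by
    intro a ha
    rcases List.mem_cons.1 ha with rfl | har
    · rw [← hzl, hv, ne_eq, hPn.getElem_inj_iff]
      omega
    · intro h
      exact hdisj (h ▸ hv ▸ List.getElem_mem hfp : a ∈ P) har
  have hsz : s ≠ z := by
    rw [← hs0, ← hzl, ne_eq, hPn.getElem_inj_iff]
    omega
  have hsD : s ∉ z :: rest := by
    intro h
    rcases List.mem_cons.1 h with h' | h'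
    · exact hsz h'
    · exact hdisj (hs0 ▸ List.getElem_mem hp0) h'
  -- unfold the infimum on the RHS
  rw [WDigraph.dist, ENNReal.iInf_add]
  refine le_iInf fun Q => ?_
  rw [ENNReal.iInf_add]
  refine le_iInf fun hQ => ?_
  obtain ⟨hQc, hQn, hQh, hQl⟩ := hQ
  have hQcG : Q.Chain' G.Adj := chain'_of_deleteVert hQc
  have hQne : Q ≠ [] := by rintro h; rw [h] at hQh; simp at hQh
  have hsQ : s ∈ Q := by rw [head?_decomp hQh]; exact List.mem_cons_self
  have hstf : s ∈ P.take f := mem_take_iff.2 ⟨0, hp0, by omega, hs0⟩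
  -- split Q at the last vertex x on P.take f
  obtain ⟨A, x, B, hQeq, hxS, hB⟩ :=
    exists_split_last (S := {a | a ∈ P.take f}) Q ⟨s, hsQ, hstf⟩
  obtain ⟨i, hip, hif, hie⟩ := mem_take_iff.1 hxS
  have hBne : B ≠ [] := by
    rintro rfl
    rw [hQeq, List.getLast?_append_of_ne_nil _ (by simp)] at hQl
    simp at hQl
    exact hztf (hQl ▸ hxS)
  -- Q' = P.take (i+1) ++ B
  have hi1p : i + 1 ≤ p := by omega
  have hPi1eq : P.take (i + 1) = P.take i ++ [x] := by
    rw [List.take_succ]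
    congr 1
    rw [List.getElem?_eq_getElem hip, hie]
    rfl
  have hPi1ne : P.take (i + 1) ≠ [] := by
    rw [hPi1eq]; simp
  have hPi1len : (P.take (i + 1)).length = i + 1 := by
    rw [List.length_take]; omega
  have hPi1chainG : (P.take (i + 1)).Chain' G.Adj :=
    hPc.infix (List.take_prefix _ _).isInfix
  have hPi1nev : ∀ a ∈ P.take (i + 1), a ≠ v := by
    intro a ha
    obtain ⟨i', _, hif', he⟩ := mem_take_iff.1 ha
    rw [← he, hv, ne_eq, hPn.getElem_inj_iff]
    omega
  have hPi1chain : (P.take (i + 1)).Chain' G'.Adj :=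
    chain'_deleteVert hPi1chainG hPi1nev
  have hPi1last : (P.take (i + 1)).getLast? = some x := by
    rw [hPi1eq, List.getLast?_append_of_ne_nil _ (by simp)]
    rfl
  have hPi1head : (P.take (i + 1)).head? = some s := by
    rw [head?_eq_getElem hPi1ne]
    congr 1
    rw [List.getElem_take]
    exact hs0
  have hPi1sub : ∀ a ∈ P.take (i + 1), a ∈ P.take f := by
    intro a ha
    obtain ⟨i', h1, h2, h3⟩ := mem_take_iff.1 ha
    exact mem_take_iff.2 ⟨i', h1, by omega, h3⟩
  set Q' : List V := P.take (i + 1) ++ B with hQ'def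
  have hQAx : Q = (A ++ [x]) ++ B := by rw [hQeq]; simp
  have hQcc := hQAx ▸ hQc
  unfold List.Chain' at hQcc
  rw [List.isChain_append] at hQcc
  have hQ'chain : Q'.Chain' G'.Adj := by
    rw [hQ'def]
    unfold List.Chain'
    rw [List.isChain_append]
    refine ⟨hPi1chain, hQcc.2.1, fun a ha y hy => ?_⟩
    rw [hPi1last] at ha
    have hax : a = x := by have := ha; simp at this; exact this.symm
    subst hax
    exact hQcc.2.2 a (by rw [List.getLast?_append_of_ne_nil _ (by simp : [a] ≠ ([] : List V))]; rfl) y hy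
  have hQ'head : Q'.head? = some s := by
    rw [hQ'def, head?_append_left hPi1ne, hPi1head]
  have hQ'last : Q'.getLast? = some z := by
    rw [hQ'def, List.getLast?_append_of_ne_nil _ hBne]
    rw [hQAx, List.getLast?_append_of_ne_nil _ hBne] at hQl
    exact hQl
  have hAxpath : G.IsPathFrom s x (A ++ [x]) := by
    refine ⟨chain'_of_deleteVert (hQc.infix ⟨[], B, by simp [hQAx]⟩), ?_, ?_, ?_⟩
    · exact hQn.sublist (hQAx ▸ List.sublist_append_left _ _)
    · rw [hQAx, head?_append_left (by simp)] at hQh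
      exact hQh
    · rw [List.getLast?_append_of_ne_nil _ (by simp : [x] ≠ ([] : List V))]
      rfl
  have hkey1 : G.len (P.take (i + 1)) ≤ G.len (A ++ [x]) := by
    have h1 : ENNReal.ofReal (G.len (P.take (i + 1))) = G.dist s x := by
      have := hshort i hip
      rwa [List.getD_eq_getElem P s hip, hie] at this
    have h2 := dist_le_len hAxpath
    rw [← h1] at h2
    exact (ENNReal.ofReal_le_ofReal_iff (len_nonneg hwG hAxpath.1)).1 h2
  have hlenQ' : G.len Q' ≤ G.len Q := by
    have e1 : G.len Q' = G.len (P.take (i + 1)) + G.len (x :: B) := by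
      rw [hQ'def, hPi1eq, show (P.take i ++ [x]) ++ B = P.take i ++ x :: B by simp,
        len_append_cons, ← hPi1eq]
    have e2 : G.len Q = G.len (A ++ [x]) + G.len (x :: B) := by
      rw [hQeq, len_append_cons]
    rw [e1, e2]
    linarith
  -- split Q' at the first vertex y in z :: rest
  have hzQ' : z ∈ Q' := by
    rw [getLast?_decomp hQ'last]
    simp
  obtain ⟨E, y, F, hQ'eq, hyD, hE⟩ :=
    exists_split_first (S := {a | a ∈ z :: rest}) Q' ⟨z, hzQ', List.mem_cons_self⟩
  obtain ⟨D1, D2, hDeq⟩ := List.append_of_mem hyD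
  have hEne : E ≠ [] := by
    rintro rfl
    rw [hQ'eq] at hQ'head
    simp at hQ'head
    exact hsD (hQ'head ▸ hyD)
  set R : List V := E ++ y :: D2 with hRdef
  have hyD2chainG : (y :: D2).Chain' G.Adj := hDchain.infix ⟨D1, [], by rw [← hDeq]; simp⟩
  have hyD2chain : (y :: D2).Chain' G'.Adj :=
    chain'_deleteVert hyD2chainG fun a ha => hDnev a (hDeq ▸ List.mem_append_right D1 ha)
  have hEychain : (E ++ [y]).Chain' G'.Adj :=
    hQ'chain.infix ⟨[], F, by rw [hQ'eq]; simp⟩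
  have hRchain : R.Chain' G'.Adj := by
    rw [hRdef, show E ++ y :: D2 = (E ++ [y]) ++ D2 by simp]
    unfold List.Chain'
    rw [List.isChain_append]
    refine ⟨hEychain, hyD2chain.tail, fun a ha y' hy' => ?_⟩
    rw [List.getLast?_append_of_ne_nil _ (by simp : [y] ≠ ([] : List V))] at ha
    simp only [List.getLast?_singleton, Option.mem_def, Option.some_inj] at ha
    subst ha
    exact (List.isChain_cons.1 hyD2chain).1 y' hy'
  have hRhead : R.head? = some s := by
    rw [hRdef, head?_append_left hEne]
    rw [hQ'eq, head?_append_left hEne] at hQ'head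
    exact hQ'head
  have hyD2last : (y :: D2).getLast? = some t := by
    rw [hDeq, show D1 ++ y :: D2 = (D1 ++ [y]) ++ D2 by simp] at hDlast
    cases D2 with
    | nil =>
      rw [List.append_nil, List.getLast?_append_of_ne_nil _ (by simp : [y] ≠ ([] : List V))] at hDlast
      simpa using hDlast
    | cons d D2' =>
      rw [List.getLast?_append_of_ne_nil _ (by simp : d :: D2' ≠ [])] at hDlast
      rw [show y :: d :: D2' = [y] ++ d :: D2' by simp,
        List.getLast?_append_of_ne_nil _ (by simp : d :: D2' ≠ [])]
      exact hDlast
  have hRlast : R.getLast? = some t := by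
    rw [hRdef, List.getLast?_append_of_ne_nil _ (by simp : y :: D2 ≠ []), hyD2last]
  have hQ'nodup : Q'.Nodup := by
    rw [hQ'def, List.nodup_append]
    refine ⟨hPn.sublist (List.take_sublist _ _),
      hQn.sublist (by rw [hQAx]; exact List.sublist_append_right _ _), ?_⟩
    intro a ha b hb hab
    subst hab
    exact hB a hb (hPi1sub a ha)
  have hyD2nodup : (y :: D2).Nodup :=
    hDnodup.sublist (by rw [hDeq]; exact List.sublist_append_right _ _)
  have hRnodup : R.Nodup := by
    rw [hRdef, List.nodup_append]
    refine ⟨hQ'nodup.sublist (by rw [hQ'eq]; exact List.sublist_append_left _ _),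
      hyD2nodup, ?_⟩
    intro a haE b haD hab
    subst hab
    refine hE a haE ?_
    show a ∈ z :: rest
    rw [hDeq]
    exact List.mem_append_right D1 haD
  have hRpath : G'.IsPathFrom s t R := ⟨hRchain, hRnodup, hRhead, hRlast⟩
  -- length bound
  have hyFchainG : (y :: F).Chain' G.Adj :=
    chain'_of_deleteVert (hQ'chain.infix ⟨E, [], by rw [hQ'eq]; simp⟩)
  have hD1ychainG : (D1 ++ [y]).Chain' G.Adj :=
    hDchain.infix ⟨[], D2, by rw [hDeq]; simp⟩
  have hlenR : G.len R ≤ G.len Q' + G.len (z :: rest) := by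
    have e1 : G.len R = G.len (E ++ [y]) + G.len (y :: D2) := by
      rw [hRdef, len_append_cons]
    have e2 : G.len Q' = G.len (E ++ [y]) + G.len (y :: F) := by
      rw [hQ'eq, len_append_cons]
    have e3 : G.len (z :: rest) = G.len (D1 ++ [y]) + G.len (y :: D2) := by
      rw [hDeq, len_append_cons]
    have n1 : 0 ≤ G.len (y :: F) := len_nonneg hwG hyFchainG
    have n2 : 0 ≤ G.len (D1 ++ [y]) := len_nonneg hwG hD1ychainG
    linarith
  -- condition (C1) with k = min |E| (i+1)
  set k := min E.length (i + 1) with hk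
  have hkE : k ≤ E.length := min_le_left _ _
  have hki1 : k ≤ i + 1 := min_le_right _ _
  have hEeq : Q'.take E.length = E := by rw [hQ'eq, List.take_left]
  have hRtakek : R.take k = P.take k := by
    rw [hRdef, List.take_append]
    have h0 : k - E.length = 0 := by omega
    rw [h0]
    simp only [List.take_zero, List.append_nil]
    rw [← hEeq, List.take_take, min_eq_left hkE]
    rw [hQ'def, List.take_append]
    have h2 : k - (P.take (i + 1)).length = 0 := by rw [hPi1len]; omega
    rw [h2]
    simp only [List.take_zero, List.append_nil]
    rw [List.take_take, min_eq_left hki1]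
  have hC1take : ∀ a ∈ R.take k, a ∈ P.take f := by
    intro a ha
    rw [hRtakek] at ha
    obtain ⟨i', h1, h2, h3⟩ := mem_take_iff.1 ha
    exact mem_take_iff.2 ⟨i', h1, by omega, h3⟩
  have hQ'drop : Q'.drop (i + 1) = B := by
    rw [hQ'def]
    exact List.drop_left' hPi1len
  have hC1drop : ∀ a ∈ R.drop k, a ∉ P.take f := by
    intro a ha
    rw [hRdef, List.drop_append] at ha
    have h0 : k - E.length = 0 := by omega
    rw [h0, List.drop_zero] at ha
    rcases List.mem_append.1 ha with haE | haD
    · have hke : k < E.length := by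
        by_contra hcon
        push_neg at hcon
        rw [List.drop_eq_nil_of_le hcon] at haE
        simp at haE
      have hki : k = i + 1 := by
        rcases le_total E.length (i + 1) with hle | hle
        · rw [hk, min_eq_left hle] at hke; omega
        · rw [hk, min_eq_right hle]
      have hsub : E.drop k ⊆ B := by
        rw [← hEeq, List.drop_take, hki, hQ'drop]
        exact List.take_subset _ _
      exact hB a (hsub haE)
    · refine hDnoP a ?_
      rw [hDeq]
      exact List.mem_append_right D1 haD
  -- final bound
  have hlQ : G'.len Q = G.len Q := rfl
  have hlenbound : ENNReal.ofReal (G.len R) ≤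
      ENNReal.ofReal (G'.len Q) + ENNReal.ofReal (G.len (z :: rest)) := by
    rw [hlQ, ← ENNReal.ofReal_add (len_nonneg hwG hQcG) (len_nonneg hwG hDchain)]
    exact ENNReal.ofReal_le_ofReal (by linarith)
  by_cases hcase : ∃ a ∈ R.dropLast, a ∈ P.drop (f + 1)
  · have hjump : IsJumping G P f s t R := ⟨hRpath, ⟨k, hC1take, hC1drop⟩, hcase⟩
    refine le_trans ?_ hlenbound
    rw [jdist]
    exact iInf₂_le R hjump
  · push_neg at hcase
    have hdep : IsDeparting G P f s t R := ⟨hRpath, ⟨k, hC1take, hC1drop⟩, hcase⟩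
    refine le_trans (le_trans hdd ?_) hlenbound
    rw [ddist]
    exact iInf₂_le R hdep


end Directions

/-- **Handling jumping paths.** `T` is a shortest path tree of `G` rooted at `s`
(given by `VT`, `tp`), `z ∈ V(T)`, and `S2 = V(T₂)` is the vertex set of the subtree of
`T` rooted at `z` (so the tree path `P_T = tp z` is a prefix of the tree path of every
vertex of `T₂`).  Let `t ∈ V(T₂) \ {z}` and let `v_f = P_T[f] ∈ V(P_T) \ {s}` be the
failed vertex.  If `ddist_{G−v_f}(s,t) ≥ jdist_{G−v_f}(s,t)`, then
`jdist_{G−v_f}(s,t) = dist_{G−v_f}(s,z) + dist_T(z,t)`, where `dist_T(z,t)` is the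
length of the tree path from `z` to `t` (the suffix of `tp t` starting at `z`). -/
theorem jdist_eq_dist_add_treeDist {V : Type} [Fintype V] (G : WDigraph V)
    (hw : G.PosWeights) (s : V) (VT : Set V) (tp : V → List V)
    (hT : IsSPT G s VT tp)
    (z : V) (hz : z ∈ VT) (S2 : Set V) (hzS2 : z ∈ S2) (hS2 : S2 ⊆ VT)
    (hdesc : ∀ v ∈ S2, tp z <+: tp v)
    (hshort : ShortestPrefixes G s (tp z))
    (t : V) (ht : t ∈ S2) (htz : t ≠ z)
    (f : ℕ) (hf1 : 1 ≤ f) (hf2 : f < (tp z).length)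
    (hdd : jdist G (tp z) f s t ≤ ddist G (tp z) f s t) :
    jdist G (tp z) f s t =
      (G.deleteVert ((tp z).getD f s)).dist s z +
        ENNReal.ofReal (G.len ((tp t).drop ((tp z).length - 1))) := by
  classical
  set P := tp z with hPdef
  have hP : G.IsPathFrom s z P := hT.path z hz
  have hQt0 : G.IsPathFrom s t (tp t) := hT.path t (hS2 ht)
  obtain ⟨rest, hrest⟩ := hdesc t ht
  have hQt : G.IsPathFrom s t (P ++ rest) := by rw [hrest]; exact hQt0
  obtain ⟨hPc, hPn, hPh, hPl⟩ := hP
  have hPne : P ≠ [] := by rintro h; rw [h] at hPh; simp at hPh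
  have hp0 : 0 < P.length := List.length_pos_iff.2 hPne
  have hs0 : P[0]'hp0 = s := by
    rw [JHelp.head?_eq_getElem hPne] at hPh; simpa using hPh
  have hzl : P[P.length - 1]'(by omega) = z := by
    rw [List.getLast?_eq_getLast hPne, List.getLast_eq_getElem] at hPl
    simpa using hPl
  have hsz : s ≠ z := by
    rw [← hs0, ← hzl, ne_eq, hPn.getElem_inj_iff]
    omega
  have hdropD : (tp t).drop (P.length - 1) = z :: rest := by
    rw [← hrest, List.drop_append]
    have h1 : P.drop (P.length - 1) = [z] := by
      rw [List.drop_eq_getElem_cons (by omega : P.length - 1 < P.length), hzl]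
      have h2 : P.length - 1 + 1 = P.length := by omega
      rw [h2, List.drop_length]
    rw [h1]
    have h3 : P.length - 1 - P.length = 0 := by omega
    rw [h3, List.drop_zero]
    simp
  rw [hdropD]
  rcases Nat.lt_or_ge (f + 1) P.length with hlt | hge
  · have hst : ENNReal.ofReal (G.len (P ++ rest)) = G.dist s t := by
      have := hT.shortest t (hS2 ht)
      rw [← hrest] at this
      exact this
    exact le_antisymm
      (le_dir G hw s z t P rest ⟨hPc, hPn, hPh, hPl⟩ hQt hshort f hf1 hlt hdd)
      (ge_dir G hw s z t P rest ⟨hPc, hPn, hPh, hPl⟩ hQt hshort hst f hlt)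
  · -- f = P.length - 1, the failed vertex is z itself
    have hvz : P.getD f s = z := by
      rw [List.getD_eq_getElem P s hf2, ← hzl]
      congr 1
      omega
    have hjtop : jdist G P f s t = ⊤ := by
      rw [jdist, iInf_eq_top]
      intro R
      rw [iInf_eq_top]
      intro hR
      exfalso
      obtain ⟨-, -, a, ha, haP⟩ := hR
      rw [show f + 1 = P.length by omega, List.drop_length] at haP
      simp at haP
    have hdtop : (G.deleteVert (P.getD f s)).dist s z = ⊤ := by
      rw [hvz, WDigraph.dist, iInf_eq_top]
      intro l
      rw [iInf_eq_top]
      intro hl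
      exfalso
      obtain ⟨hc, hn, hh, hlast⟩ := hl
      have hlne : l ≠ [] := by rintro rfl; simp at hh
      have hldec := JHelp.getLast?_decomp hlast
      cases hdl : l.dropLast with
      | nil =>
        rw [hdl] at hldec
        rw [hldec] at hh
        simp at hh
        exact hsz hh.symm
      | cons b t' =>
        rw [hdl] at hldec
        rw [hldec] at hc
        unfold List.Chain' at hc
        rw [List.isChain_append] at hc
        obtain ⟨y, hy⟩ : ∃ y, (b :: t').getLast? = some y :=
          ⟨_, List.getLast?_eq_getLast (by simp)⟩
        have := hc.2.2 y hy z rfl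
        exact this.2.2 rfl
    rw [hjtop, hdtop, top_add]
end

section
/- Let G₂ be the directed weighted graph with vertex set (V(T₂) \ {z}) ∪ {s} whose edges are: all edges of G joining two vertices of V(T₂) \ {z}, with their weights in G; together with, for every u ∈ V(T₂) \ {z} with dist_{G[Ψ(V(T₁))]}(s,u) < ∞, an edge (s,u) of weight dist_{G[Ψ(V(T₁))]}(s,u). Then for every failed vertex x ∈ V(T₂) \ {z} and every destination t ∈ V(T₂) \ {z}, dist_{G₂−x}(s,t) = dist_{G−x}(s,t). -/
open scoped ENNReal

/-- The graph `G₂`: vertex set `(V(T₂) \ {z}) ∪ {s}`; its edges are all edges of `G`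
joining two vertices of `S2 \ {z} = V(T₂) \ {z}` (with their `G`-weights), together
with an edge `(s, u)` of weight `dist_{G[Ψ(S1)]}(s, u)` for every `u ∈ S2 \ {z}` with
`dist_{G[Ψ(S1)]}(s, u) < ∞`. -/
noncomputable def G2 {V : Type} [DecidableEq V] (G : WDigraph V) (s z : V) (S1 S2 : Set V) :
    WDigraph V where
  Adj a b := (a ∈ S2 \ {z} ∧ b ∈ S2 \ {z} ∧ G.Adj a b) ∨
    (a = s ∧ b ∈ S2 \ {z} ∧ (G.psiSub S1).dist s b ≠ ⊤)
  w a b := if a = s then ((G.psiSub S1).dist s b).toReal else G.w a b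

namespace WDigraph

variable {V : Type}

lemma len_cons_cons (G : WDigraph V) (a b : V) (l : List V) :
    G.len (a :: b :: l) = G.w a b + G.len (b :: l) := by
  simp [len]

lemma len_nonneg (G : WDigraph V) {R : V → V → Prop} (hR : ∀ a b, R a b → 0 ≤ G.w a b) :
    ∀ l : List V, l.Chain' R → 0 ≤ G.len l
  | [] , _ => le_refl 0
  | [a], _ => le_refl 0
  | a :: b :: l, h => by
      have h' := List.isChain_cons_cons.mp h
      rw [len_cons_cons]
      exact add_nonneg (hR a b h'.1) (len_nonneg G hR (b :: l) h'.2)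

lemma len_append_cons (G : WDigraph V) :
    ∀ (A : List V) (v : V) (B : List V),
      G.len (A ++ v :: B) = G.len (A ++ [v]) + G.len (v :: B)
  | [], v, B => by simp [len]
  | [a], v, B => by simp [len_cons_cons]; simp [len]
  | a :: a' :: A, v, B => by
      have ih := len_append_cons G (a' :: A) v B
      simp only [List.cons_append] at ih ⊢
      rw [len_cons_cons, ih, len_cons_cons, add_assoc]

lemma len_append_getLast (G : WDigraph V) {A : List V} {b : V} (h : A.getLast? = some b)
    (u : V) (B : List V) :
    G.len (A ++ u :: B) = G.len A + (G.w b u + G.len (u :: B)) := by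
  obtain ⟨A', rfl⟩ := List.getLast?_eq_some_iff.mp h
  rw [List.append_assoc, List.singleton_append, len_append_cons, len_cons_cons]

lemma len_congr (G G' : WDigraph V) :
    ∀ (l : List V), (∀ a b, a ∈ l → b ∈ l → G.w a b = G'.w a b) → G.len l = G'.len l
  | [], _ => rfl
  | [a], _ => rfl
  | a :: b :: l, h => by
      rw [len_cons_cons, len_cons_cons, h a b (by simp) (by simp),
        len_congr G G' (b :: l) (fun a' b' ha hb =>
          h a' b' (List.mem_cons_of_mem a ha) (List.mem_cons_of_mem a hb))]

lemma dist_le_path (G : WDigraph V) {u v : V} {l : List V} (h : G.IsPathFrom u v l) :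
    G.dist u v ≤ ENNReal.ofReal (G.len l) := iInf₂_le l h

lemma le_dist (G : WDigraph V) {u v : V} {c : ℝ≥0∞}
    (h : ∀ l, G.IsPathFrom u v l → c ≤ ENNReal.ofReal (G.len l)) : c ≤ G.dist u v :=
  le_iInf fun l => le_iInf fun hl => h l hl

lemma dist_attained [Fintype V] (G : WDigraph V) (u v : V) (h : G.dist u v ≠ ⊤) :
    ∃ l, G.IsPathFrom u v l ∧ ENNReal.ofReal (G.len l) = G.dist u v := by
  classical
  have hS : {l : List V | G.IsPathFrom u v l}.Finite := by
    apply (List.finite_length_le V (Fintype.card V)).subset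
    intro l hl
    exact hl.2.1.length_le_card
  have hne : {l : List V | G.IsPathFrom u v l}.Nonempty := by
    by_contra hemp
    rw [Set.not_nonempty_iff_eq_empty] at hemp
    apply h
    rw [dist]
    refine iInf_eq_top.mpr fun l => iInf_eq_top.mpr fun hl => ?_
    exact absurd (Set.eq_empty_iff_forall_notMem.mp hemp l hl) (fun h => h)
  have key : G.dist u v = sInf ((fun l => ENNReal.ofReal (G.len l)) '' {l | G.IsPathFrom u v l}) := by
    rw [sInf_image]; rfl
  have hmem := Set.Nonempty.csInf_mem (hne.image (fun l => ENNReal.ofReal (G.len l))) (hS.image _)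
  rw [← key] at hmem
  obtain ⟨l, hl, hl2⟩ := hmem
  exact ⟨l, hl, hl2⟩

lemma chain'_imp_mem {R S : V → V → Prop} :
    ∀ {l : List V}, l.Chain' R → (∀ a b, a ∈ l → b ∈ l → R a b → S a b) → l.Chain' S
  | [], _, _ => List.isChain_nil
  | [a], _, _ => List.isChain_singleton a
  | a :: b :: l, h, himp => by
      have h' := List.isChain_cons_cons.mp h
      exact List.isChain_cons_cons.mpr ⟨himp a b (by simp) (by simp) h'.1,
        chain'_imp_mem h'.2 (fun c d hc hd =>
          himp c d (List.mem_cons_of_mem a hc) (List.mem_cons_of_mem a hd))⟩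

lemma ne_of_chain'_delete (G : WDigraph V) (x : V) :
    ∀ {l : List V}, l.Chain' (G.deleteVert x).Adj → 2 ≤ l.length → ∀ v ∈ l, v ≠ x
  | [], _, hlen, _, _ => by simp at hlen
  | [a], _, hlen, _, _ => by simp at hlen
  | a :: b :: l, h, _, v, hv => by
      have h' := List.isChain_cons_cons.mp h
      rcases List.mem_cons.mp hv with rfl | hv'
      · exact h'.1.2.1
      · rcases l with _ | ⟨c, m⟩
        · rw [List.mem_singleton] at hv'
          subst hv'
          exact h'.1.2.2
        · exact ne_of_chain'_delete G x h'.2 (by simp) v hv'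

lemma all_of_chain' {R : V → V → Prop} {Q : V → Prop} (hR : ∀ a b, R a b → Q b) :
    ∀ (l : List V) (a : V), (a :: l).Chain' R → Q a → ∀ v ∈ a :: l, Q v
  | [], a, _, hqa, v, hv => by rw [List.mem_singleton] at hv; exact hv ▸ hqa
  | b :: l, a, hch, hqa, v, hv => by
      have h' := List.isChain_cons_cons.mp hch
      rcases List.mem_cons.mp hv with rfl | hv'
      · exact hqa
      · exact all_of_chain' hR l b h'.2 (hR a b h'.1) v hv'

lemma head?_append_of_ne_nil {α : Type*} {l : List α} (l' : List α) (h : l ≠ []) :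
    (l ++ l').head? = l.head? := by
  cases l with
  | nil => exact absurd rfl h
  | cons a m => rfl

lemma getLast?_append_of_ne_nil {α : Type*} (l : List α) {l' : List α} (h : l' ≠ []) :
    (l ++ l').getLast? = l'.getLast? := by
  rw [List.getLast?_append]
  cases hl : l'.getLast? with
  | none => exact absurd (List.getLast?_eq_none_iff.mp hl) h
  | some a => rfl

lemma split_list {S1 S2' : Set V} (hdisj : ∀ v, v ∈ S1 → v ∈ S2' → False) :
    ∀ (l : List V), (∀ v ∈ l, v ∈ S1 ∨ v ∈ S2') → (∃ v ∈ l, v ∈ S1) →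
      (∀ b ∈ l.getLast?, b ∈ S2') →
      ∃ C b u D, l = C ++ b :: u :: D ∧ b ∈ S1 ∧ ∀ v ∈ u :: D, v ∈ S2' := by
  intro l
  induction l with
  | nil => intro _ h _; rcases h with ⟨v, hv, _⟩; exact absurd hv (by simp)
  | cons a l ih =>
    intro hmem hex hlast
    by_cases hl : ∀ v ∈ l, v ∈ S2'
    · have ha : a ∈ S1 := by
        rcases hex with ⟨v, hv, hvS1⟩
        rcases List.mem_cons.mp hv with rfl | hv'
        · exact hvS1
        · exact absurd (hl v hv') (fun h => hdisj v hvS1 h)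
      rcases l with _ | ⟨u, D⟩
      · exact absurd (hlast a rfl) (fun h => hdisj a ha h)
      · exact ⟨[], a, u, D, rfl, ha, hl⟩
    · push_neg at hl
      obtain ⟨v0, hv0, hv0n⟩ := hl
      have hexl : ∃ v ∈ l, v ∈ S1 :=
        ⟨v0, hv0, (hmem v0 (List.mem_cons_of_mem a hv0)).resolve_right hv0n⟩
      have hlne : l ≠ [] := fun h => absurd hv0 (by simp [h])
      obtain ⟨c, m, rfl⟩ : ∃ c m, l = c :: m := by
        rcases l with _ | ⟨c, m⟩
        · exact absurd rfl hlne
        · exact ⟨c, m, rfl⟩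
      obtain ⟨C, b, u, D, heq, hb, hall⟩ := ih
        (fun v hv => hmem v (List.mem_cons_of_mem a hv)) hexl
        (fun b hb => hlast b (by rwa [List.getLast?_cons_cons]))
      exact ⟨a :: C, b, u, D, by rw [heq]; rfl, hb, hall⟩

end WDigraph

/-- **Correctness of the `G₂` construction.** `T` is a shortest path tree of `G` rooted
at `s` (given by `VT`, `tp`), split into subtrees `T₁` (containing `s`, with vertex set
`S1`, ancestor-closed) and `T₂` (rooted at `z`, with vertex set `S2`), with
`S1 ∪ S2 = V(T)` and `S1 ∩ S2 = {z}`.  Then for every failed vertex `x ∈ S2 \ {z}` and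
destination `t ∈ S2 \ {z}`, `dist_{G₂−x}(s,t) = dist_{G−x}(s,t)`. -/
theorem G2_dist_eq {V : Type} [Fintype V] [DecidableEq V] (G : WDigraph V) (hw : G.PosWeights)
    (s : V) (VT : Set V) (tp : V → List V) (hT : IsSPT G s VT tp)
    (z : V) (S1 S2 : Set V)
    (hunion : S1 ∪ S2 = VT) (hinter : S1 ∩ S2 = {z}) (hsS1 : s ∈ S1)
    (hanc : ∀ v ∈ S1, ∀ u ∈ tp v, u ∈ S1)
    (hdesc : ∀ v ∈ S2, tp z <+: tp v) :
    ∀ x ∈ S2 \ {z}, ∀ t ∈ S2 \ {z},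
      ((G2 G s z S1 S2).deleteVert x).dist s t = (G.deleteVert x).dist s t := by
  classical
  intro x hx t ht
  have hzS1 : z ∈ S1 := by
    have hz : z ∈ S1 ∩ S2 := by rw [hinter]; exact rfl
    exact hz.1
  have hdisj : ∀ v, v ∈ S1 → v ∈ S2 \ {z} → False := by
    intro v h1 h2
    have hv : v ∈ S1 ∩ S2 := ⟨h1, h2.1⟩
    rw [hinter] at hv
    exact h2.2 hv
  have hxS1 : x ∉ S1 := fun h => hdisj x h hx
  have hsx : s ≠ x := fun h => hxS1 (h ▸ hsS1)
  have hsS2' : s ∉ S2 \ {z} := fun h => hdisj s hsS1 h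
  have hts : t ≠ s := fun h => hsS2' (h ▸ ht)
  have hVTcases : ∀ v ∈ VT, v ∈ S1 ∨ v ∈ S2 \ {z} := by
    intro v hv
    rw [← hunion] at hv
    rcases hv with h | h
    · exact Or.inl h
    · by_cases hvz : v = z
      · exact Or.inl (hvz ▸ hzS1)
      · exact Or.inr ⟨h, hvz⟩
  have htpb : ∀ b ∈ S1, G.IsPathFrom s b (tp b) ∧ (∀ v ∈ tp b, v ∈ S1) ∧
      ENNReal.ofReal (G.len (tp b)) = G.dist s b := by
    intro b hb
    have hbVT : b ∈ VT := by rw [← hunion]; exact Or.inl hb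
    exact ⟨hT.path b hbVT, hanc b hb, hT.shortest b hbVT⟩
  apply le_antisymm
  · -- dist (G2 - x) ≤ dist (G - x)
    refine WDigraph.le_dist _ (fun P hP => ?_)
    obtain ⟨hch, hnd, hhd, hlastP⟩ := hP
    have hchG : P.Chain' G.Adj := WDigraph.chain'_imp_mem hch (fun a b _ _ h => h.1)
    have hallVT : ∀ v ∈ P, v ∈ VT := by
      intro v hv
      obtain ⟨A, B, rfl⟩ := List.append_of_mem hv
      have hsplit : A ++ v :: B = (A ++ [v]) ++ B := by simp
      rw [hsplit] at hchG hnd hhd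
      obtain ⟨hc1, -, -⟩ := List.isChain_append.mp hchG
      have hpath : G.IsPathFrom s v (A ++ [v]) := by
        refine ⟨hc1, List.Nodup.sublist (List.sublist_append_left _ _) hnd, ?_,
          List.getLast?_concat (l := A)⟩
        rwa [WDigraph.head?_append_of_ne_nil B (by simp)] at hhd
      exact hT.spans v ((G.dist_le_path hpath).trans_lt ENNReal.ofReal_lt_top).ne
    have hallS12 : ∀ v ∈ P, v ∈ S1 ∨ v ∈ S2 \ {z} := fun v hv => hVTcases v (hallVT v hv)
    have hsP : s ∈ P := List.mem_of_mem_head? (by rw [hhd]; rfl)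
    have hlastS2' : ∀ b ∈ P.getLast?, b ∈ S2 \ {z} := by
      intro b hb
      rw [hlastP] at hb
      exact (Option.mem_some_iff.mp hb) ▸ ht
    obtain ⟨C, b, u, D, hPeq, hbS1, hallS2'⟩ :=
      WDigraph.split_list hdisj P hallS12 ⟨s, hsP, hsS1⟩ hlastS2'
    subst hPeq
    have hP2 : C ++ b :: u :: D = (C ++ [b]) ++ u :: D := by simp
    rw [hP2] at hch hnd hhd hlastP ⊢
    obtain ⟨hch1, hch2, hlink⟩ := List.isChain_append.mp hch
    have hbu : (G.deleteVert x).Adj b u := hlink b (List.getLast?_concat (l := C)) u rfl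
    have hhd1 : (C ++ [b]).head? = some s := by
      rwa [WDigraph.head?_append_of_ne_nil _ (by simp)] at hhd
    have hGpath1 : G.IsPathFrom s b (C ++ [b]) :=
      ⟨WDigraph.chain'_imp_mem hch1 (fun a c _ _ h => h.1),
        List.Nodup.sublist (List.sublist_append_left _ _) hnd, hhd1, List.getLast?_concat (l := C)⟩
    obtain ⟨⟨tpch, tpnd, tphd, tplast⟩, tpS1, tpLen⟩ := htpb b hbS1
    have tpne : tp b ≠ [] := by intro h; rw [h] at tphd; simp at tphd
    have huS2' : u ∈ S2 \ {z} := hallS2' u (by simp)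
    have huS1 : u ∉ S1 := fun h => hdisj u h huS2'
    have hpsi : (G.psiSub S1).IsPathFrom s u (tp b ++ [u]) := by
      refine ⟨List.isChain_append.mpr ⟨WDigraph.chain'_imp_mem tpch
          (fun a c ha _ h => ⟨h, Or.inl (tpS1 a ha)⟩), List.isChain_singleton u, ?_⟩,
        ?_, ?_, List.getLast?_concat⟩
      · intro y hy w hw
        rw [tplast] at hy
        cases Option.mem_some_iff.mp hy
        cases Option.mem_some_iff.mp hw
        exact ⟨hbu.1, Or.inl hbS1⟩
      · rw [List.nodup_append]
        refine ⟨tpnd, List.nodup_singleton u, ?_⟩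
        intro a ha b' hb2 he
        rw [List.mem_singleton] at hb2
        exact huS1 (by subst hb2; subst he; exact tpS1 _ ha)
      · rw [WDigraph.head?_append_of_ne_nil _ tpne]; exact tphd
    have hd1le : (G.psiSub S1).dist s u ≤ ENNReal.ofReal (G.len (tp b ++ [u])) :=
      (G.psiSub S1).dist_le_path hpsi
    have hd1top : (G.psiSub S1).dist s u ≠ ⊤ := (hd1le.trans_lt ENNReal.ofReal_lt_top).ne
    have hnex : ∀ v ∈ (C ++ [b]) ++ u :: D, v ≠ x :=
      WDigraph.ne_of_chain'_delete G x hch (by simp; omega)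
    have hux : u ≠ x := hnex u (by simp)
    have hchD : (u :: D).Chain' ((G2 G s z S1 S2).deleteVert x).Adj :=
      WDigraph.chain'_imp_mem hch2 (fun a c ha hc h =>
        ⟨Or.inl ⟨hallS2' a ha, hallS2' c hc, h.1⟩, h.2.1, h.2.2⟩)
    have hndu : (u :: D).Nodup := List.Nodup.sublist (List.sublist_append_right _ _) hnd
    have hsND : s ∉ u :: D := fun h => hsS2' (hallS2' s h)
    have hlastu : (u :: D).getLast? = some t := by
      rwa [WDigraph.getLast?_append_of_ne_nil _ (by simp)] at hlastP
    have hG2path : ((G2 G s z S1 S2).deleteVert x).IsPathFrom s t (s :: u :: D) := by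
      refine ⟨List.isChain_cons_cons.mpr ⟨⟨Or.inr ⟨rfl, huS2', hd1top⟩, hsx, hux⟩, hchD⟩,
        List.nodup_cons.mpr ⟨hsND, hndu⟩, rfl, ?_⟩
      rw [List.getLast?_cons_cons]; exact hlastu
    refine (((G2 G s z S1 S2).deleteVert x).dist_le_path hG2path).trans ?_
    have hlen2 : ((G2 G s z S1 S2).deleteVert x).len (s :: u :: D)
        = ((G.psiSub S1).dist s u).toReal + G.len (u :: D) := by
      have h1 : (G2 G s z S1 S2).len (s :: u :: D)
          = (G2 G s z S1 S2).w s u + (G2 G s z S1 S2).len (u :: D) :=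
        WDigraph.len_cons_cons _ s u D
      have h2 : (G2 G s z S1 S2).w s u = ((G.psiSub S1).dist s u).toReal := if_pos rfl
      have h3 : (G2 G s z S1 S2).len (u :: D) = G.len (u :: D) :=
        WDigraph.len_congr _ _ (u :: D) (fun a c ha _ =>
          if_neg (show ¬ a = s from fun he => hsND (he ▸ ha)))
      exact h1.trans (by rw [h2, h3])
    have hchDG : (u :: D).Chain' G.Adj :=
      WDigraph.chain'_imp_mem hch2 (fun a c _ _ h => h.1)
    have hlenD0 : 0 ≤ G.len (u :: D) := G.len_nonneg (fun a c h => (hw a c h).le) _ hchDG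
    have hlen10 : 0 ≤ G.len (C ++ [b]) := G.len_nonneg (fun a c h => (hw a c h).le) _ hGpath1.1
    have htp0 : 0 ≤ G.len (tp b) := G.len_nonneg (fun a c h => (hw a c h).le) _ tpch
    have hwbu0 : 0 ≤ G.w b u := (hw b u hbu.1).le
    have htple : G.len (tp b) ≤ G.len (C ++ [b]) := by
      have h := G.dist_le_path hGpath1
      rw [← tpLen] at h
      exact (ENNReal.ofReal_le_ofReal_iff hlen10).mp h
    have hlentotal : G.len ((C ++ [b]) ++ u :: D)
        = G.len (C ++ [b]) + (G.w b u + G.len (u :: D)) :=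
      G.len_append_getLast (List.getLast?_concat (l := C)) u D
    have hlenpsi : G.len (tp b ++ [u]) = G.len (tp b) + (G.w b u + G.len [u]) :=
      G.len_append_getLast tplast u []
    have hlu : G.len [u] = 0 := rfl
    show _ ≤ ENNReal.ofReal (G.len ((C ++ [b]) ++ u :: D))
    rw [hlen2]
    calc ENNReal.ofReal (((G.psiSub S1).dist s u).toReal + G.len (u :: D))
        = ENNReal.ofReal ((G.psiSub S1).dist s u).toReal
            + ENNReal.ofReal (G.len (u :: D)) :=
          ENNReal.ofReal_add ENNReal.toReal_nonneg hlenD0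
      _ = (G.psiSub S1).dist s u + ENNReal.ofReal (G.len (u :: D)) := by
          rw [ENNReal.ofReal_toReal hd1top]
      _ ≤ ENNReal.ofReal (G.len (tp b ++ [u])) + ENNReal.ofReal (G.len (u :: D)) :=
          add_le_add_left hd1le _
      _ ≤ ENNReal.ofReal (G.len ((C ++ [b]) ++ u :: D)) := by
          rw [hlentotal, hlenpsi, hlu,
            ← ENNReal.ofReal_add (by linarith) hlenD0]
          refine ENNReal.ofReal_le_ofReal ?_
          linarith
  · -- dist (G - x) ≤ dist (G2 - x)
    refine WDigraph.le_dist _ (fun P hP => ?_)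
    obtain ⟨hch, hnd, hhd, hlastP⟩ := hP
    rcases P with _ | ⟨s0, M⟩
    · simp at hhd
    have hs0 : s0 = s := by simpa using hhd
    subst s0
    rcases M with _ | ⟨u, D⟩
    · simp at hlastP
      exact absurd hlastP.symm hts
    have h1 := List.isChain_cons_cons.mp hch
    obtain ⟨hAdj2, hsx', hux⟩ := h1.1
    have hsND : s ∉ u :: D := (List.nodup_cons.mp hnd).1
    have hndu : (u :: D).Nodup := (List.nodup_cons.mp hnd).2
    rcases hAdj2 with ⟨hsS2'', -, -⟩ | ⟨-, huS2', hd1top⟩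
    · exact absurd hsS2'' hsS2'
    have hallS2' : ∀ v ∈ u :: D, v ∈ S2 \ {z} :=
      WDigraph.all_of_chain' (R := ((G2 G s z S1 S2).deleteVert x).Adj)
        (fun a c h => by
          rcases h.1 with ⟨-, hc, -⟩ | ⟨-, hc, -⟩ <;> exact hc) D u h1.2 huS2'
    have hchD : (u :: D).Chain' (G.deleteVert x).Adj :=
      WDigraph.chain'_imp_mem h1.2 (fun a c ha _ h => by
        have has : a ≠ s := fun he => hsND (he ▸ ha)
        rcases h.1 with ⟨-, -, hGac⟩ | ⟨has', -, -⟩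
        · exact ⟨hGac, h.2.1, h.2.2⟩
        · exact absurd has' has)
    have hlastu : (u :: D).getLast? = some t := by
      rwa [List.getLast?_cons_cons] at hlastP
    obtain ⟨Q, hQ, hQlen⟩ := WDigraph.dist_attained (G.psiSub S1) s u hd1top
    obtain ⟨Qch, Qnd, Qhd, Qlast⟩ := hQ
    obtain ⟨Q', rfl⟩ := List.getLast?_eq_some_iff.mp Qlast
    have huS1 : u ∉ S1 := fun h => hdisj u h huS2'
    have hQ'ne : Q' ≠ [] := by
      rintro rfl
      have hus : u = s := by simpa using Qhd
      exact hsS2' (hus ▸ huS2')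
    obtain ⟨b, hQ'b⟩ : ∃ b, Q'.getLast? = some b := by
      cases hb : Q'.getLast? with
      | none => exact absurd (List.getLast?_eq_none_iff.mp hb) hQ'ne
      | some b => exact ⟨b, rfl⟩
    obtain ⟨Qch1, -, Qlink⟩ := List.isChain_append.mp Qch
    have hpsibu : (G.psiSub S1).Adj b u := Qlink b hQ'b u rfl
    have hbS1 : b ∈ S1 := hpsibu.2.resolve_right huS1
    have hQ'path : G.IsPathFrom s b Q' :=
      ⟨WDigraph.chain'_imp_mem Qch1 (fun a c _ _ h => h.1),
        List.Nodup.sublist (List.sublist_append_left _ _) Qnd,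
        by rwa [WDigraph.head?_append_of_ne_nil _ hQ'ne] at Qhd, hQ'b⟩
    obtain ⟨⟨tpch, tpnd, tphd, tplast⟩, tpS1, tpLen⟩ := htpb b hbS1
    have tpne : tp b ≠ [] := by intro h; rw [h] at tphd; simp at tphd
    have hS1nex : ∀ v ∈ tp b, v ≠ x := fun v hv he => hxS1 (he ▸ tpS1 v hv)
    have hGbu : G.Adj b u := hpsibu.1
    have hbx : b ≠ x := fun he => hxS1 (he ▸ hbS1)
    have hW : (G.deleteVert x).IsPathFrom s t (tp b ++ u :: D) := by
      refine ⟨List.isChain_append.mpr ⟨WDigraph.chain'_imp_mem tpch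
          (fun a c ha hc h => ⟨h, hS1nex a ha, hS1nex c hc⟩), hchD, ?_⟩,
        ?_, by rw [WDigraph.head?_append_of_ne_nil _ tpne]; exact tphd,
        by rw [WDigraph.getLast?_append_of_ne_nil _ (by simp)]; exact hlastu⟩
      · intro y hy w hw
        rw [tplast] at hy
        cases Option.mem_some_iff.mp hy
        cases Option.mem_some_iff.mp hw
        exact ⟨hGbu, hbx, hux⟩
      · rw [List.nodup_append]
        refine ⟨tpnd, hndu, ?_⟩
        intro a ha b' hb2 he
        exact hdisj a (tpS1 a ha) (by rw [he]; exact hallS2' b' hb2)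
    refine ((G.deleteVert x).dist_le_path hW).trans ?_
    have hchDG : (u :: D).Chain' G.Adj :=
      WDigraph.chain'_imp_mem hchD (fun a c _ _ h => h.1)
    have hlenD0 : 0 ≤ G.len (u :: D) := G.len_nonneg (fun a c h => (hw a c h).le) _ hchDG
    have hlenQ'0 : 0 ≤ G.len Q' := G.len_nonneg (fun a c h => (hw a c h).le) _ hQ'path.1
    have htp0 : 0 ≤ G.len (tp b) := G.len_nonneg (fun a c h => (hw a c h).le) _ tpch
    have hwbu0 : 0 ≤ G.w b u := (hw b u hGbu).le
    have htple : G.len (tp b) ≤ G.len Q' := by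
      have h := G.dist_le_path hQ'path
      rw [← tpLen] at h
      exact (ENNReal.ofReal_le_ofReal_iff hlenQ'0).mp h
    have hlenW : G.len (tp b ++ u :: D) = G.len (tp b) + (G.w b u + G.len (u :: D)) :=
      G.len_append_getLast tplast u D
    have hlenQ : G.len (Q' ++ [u]) = G.len Q' + (G.w b u + G.len [u]) :=
      G.len_append_getLast hQ'b u []
    have hlu : G.len [u] = 0 := rfl
    have hlen2 : ((G2 G s z S1 S2).deleteVert x).len (s :: u :: D)
        = ((G.psiSub S1).dist s u).toReal + G.len (u :: D) := by
      have h1 : (G2 G s z S1 S2).len (s :: u :: D)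
          = (G2 G s z S1 S2).w s u + (G2 G s z S1 S2).len (u :: D) :=
        WDigraph.len_cons_cons _ s u D
      have h2 : (G2 G s z S1 S2).w s u = ((G.psiSub S1).dist s u).toReal := if_pos rfl
      have h3 : (G2 G s z S1 S2).len (u :: D) = G.len (u :: D) :=
        WDigraph.len_congr _ _ (u :: D) (fun a c ha _ =>
          if_neg (show ¬ a = s from fun he => hsND (he ▸ ha)))
      exact h1.trans (by rw [h2, h3])
    have hofQ : ENNReal.ofReal (G.len Q' + G.w b u) = (G.psiSub S1).dist s u := by
      rw [← hQlen]
      show ENNReal.ofReal _ = ENNReal.ofReal (G.len (Q' ++ [u]))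
      rw [hlenQ, hlu]
      ring_nf
    show ENNReal.ofReal (G.len (tp b ++ u :: D)) ≤ _
    rw [hlen2, hlenW]
    calc ENNReal.ofReal (G.len (tp b) + (G.w b u + G.len (u :: D)))
        = ENNReal.ofReal (G.len (tp b) + G.w b u) + ENNReal.ofReal (G.len (u :: D)) := by
          rw [← add_assoc, ENNReal.ofReal_add (add_nonneg htp0 hwbu0) hlenD0]
      _ ≤ ENNReal.ofReal (G.len Q' + G.w b u) + ENNReal.ofReal (G.len (u :: D)) := by
          refine add_le_add_left (ENNReal.ofReal_le_ofReal ?_) _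
          linarith
      _ = (G.psiSub S1).dist s u + ENNReal.ofReal (G.len (u :: D)) := by rw [hofQ]
      _ = ENNReal.ofReal (((G.psiSub S1).dist s u).toReal + G.len (u :: D)) := by
          rw [ENNReal.ofReal_add ENNReal.toReal_nonneg hlenD0, ENNReal.ofReal_toReal hd1top]
end

section
/- Let x, t ∈ V(T₂) \ {z} with x ≠ t and suppose dist_{G−x}(s,t) < ∞. Then there exist a shortest s–t path R in G − x, a vertex u ∈ V(T₁), and an edge (u,v) of G with v ∈ V(T₂) \ {z}, such that R is the concatenation of the tree path of T from s to u, the edge (u,v), and a path from v to t all of whose vertices lie in V(T₂) \ {z}. -/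
open scoped ENNReal

namespace Aux

open WDigraph

variable {V : Type} {α : Type*}

lemma chain'_zip {R : α → α → Prop} : ∀ {l : List α}, l.Chain' R →
    ∀ p ∈ l.zip l.tail, R p.1 p.2
  | [], _, p, hp => by simp at hp
  | [a], _, p, hp => by simp at hp
  | a :: b :: l, h, p, hp => by
    simp only [List.Chain', List.isChain_cons_cons] at h
    simp only [List.tail_cons, List.zip_cons_cons, List.mem_cons] at hp
    rcases hp with rfl | hp
    · exact h.1
    · exact chain'_zip h.2 p hp

lemma len_nonneg {G : WDigraph V} (hw : G.PosWeights) {l : List V}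
    (h : l.Chain' G.Adj) : 0 ≤ G.len l := by
  apply List.sum_nonneg
  intro r hr
  simp only [List.mem_map] at hr
  obtain ⟨p, hp, rfl⟩ := hr
  exact (hw p.1 p.2 (chain'_zip h p hp)).le

lemma len_cons₂ (G : WDigraph V) (l : List V) (a b : V) :
    G.len (a :: b :: l) = G.w a b + G.len (b :: l) := by
  simp [WDigraph.len]

lemma len_append (G : WDigraph V) : ∀ {A B : List V} {u v : V},
    A.getLast? = some u → B.head? = some v →
    G.len (A ++ B) = G.len A + G.w u v + G.len B
  | [], B, u, v, hA, hB => by simp at hA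
  | [a], B, u, v, hA, hB => by
    simp only [List.getLast?_singleton, Option.some.injEq] at hA
    subst hA
    cases B with
    | nil => simp at hB
    | cons b B' =>
      simp only [List.head?_cons, Option.some.injEq] at hB
      subst hB
      rw [List.singleton_append, len_cons₂ G B' a b]
      simp [WDigraph.len]
  | a :: a' :: A', B, u, v, hA, hB => by
    have hA' : (a' :: A').getLast? = some u := by
      rw [List.getLast?_cons_cons] at hA; exact hA
    rw [List.cons_append, List.cons_append, len_cons₂ G (A' ++ B) a a',
      ← List.cons_append, len_append G hA' hB, len_cons₂ G A' a a']
    ring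

lemma dist_le_path {G : WDigraph V} {u v : V} {l : List V}
    (h : G.IsPathFrom u v l) : G.dist u v ≤ ENNReal.ofReal (G.len l) :=
  iInf₂_le l h

lemma head?_eq_of_prefix {A B : List α} (hA : A ≠ []) :
    (A ++ B).head? = A.head? := by
  cases A with
  | nil => simp at hA
  | cons a A' => simp

lemma path_to_mem {G : WDigraph V} {s t b : V} {l : List V}
    (h : G.IsPathFrom s t l) (hb : b ∈ l) : ∃ l', G.IsPathFrom s b l' := by
  obtain ⟨C, D, rfl⟩ := List.append_of_mem hb
  obtain ⟨hc, hn, hh, -⟩ := h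
  have hpre : (C ++ [b]) <+: (C ++ b :: D) := ⟨D, by simp⟩
  refine ⟨C ++ [b], hc.prefix hpre, hn.sublist hpre.sublist, ?_, List.getLast?_concat⟩
  cases C <;> simpa using hh

lemma dist_ne_top_of_path {G : WDigraph V} {u v : V} {l : List V}
    (h : G.IsPathFrom u v l) : G.dist u v ≠ ⊤ :=
  fun ht => absurd (ht ▸ dist_le_path h)
    (by simp [lt_top_iff_ne_top.mp ENNReal.ofReal_lt_top, top_le_iff])

lemma split_last_sat (P : α → Prop) [DecidablePred P] :
    ∀ (l : List α), (∃ b ∈ l, P b) → (∀ w, l.getLast? = some w → ¬ P w) →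
    ∃ A B u, l = A ++ B ∧ A.getLast? = some u ∧ P u ∧ B ≠ [] ∧ ∀ b ∈ B, ¬ P b
  | [] => by simp
  | a :: l => by
    intro hex hlast
    rcases eq_or_ne l [] with rfl | hl
    · simp only [List.mem_singleton, exists_eq_left] at hex
      exact absurd (by simpa using hex) (hlast a (by simp))
    · by_cases hPl : ∃ b ∈ l, P b
      · obtain ⟨b, hbl⟩ := List.exists_mem_of_ne_nil l hl
        have hlast' : ∀ w, l.getLast? = some w → ¬ P w := by
          intro w hw
          apply hlast w
          cases l with
          | nil => simp at hl
          | cons c l' => rw [List.getLast?_cons_cons]; exact hw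
        obtain ⟨A, B, u, hsplit, hA, hPu, hB, hBP⟩ := split_last_sat P l hPl hlast'
        refine ⟨a :: A, B, u, by rw [hsplit, List.cons_append], ?_, hPu, hB, hBP⟩
        cases A with
        | nil => simp at hA
        | cons a' A' => rw [List.getLast?_cons_cons]; exact hA
      · push_neg at hPl
        have hPa : P a := by
          obtain ⟨c, hc, hPc⟩ := hex
          rcases List.mem_cons.mp hc with rfl | hc
          · exact hPc
          · exact absurd hPc (hPl c hc)
        exact ⟨[a], l, a, rfl, rfl, hPa, hl, hPl⟩

lemma chain'_and_forall {R : α → α → Prop} {Q : α → Prop} :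
    ∀ {l : List α}, l.Chain' R → (∀ a ∈ l, Q a) →
      l.Chain' (fun a b => R a b ∧ Q a ∧ Q b)
  | [], _, _ => List.isChain_nil
  | [a], _, _ => List.isChain_singleton a
  | a :: b :: l, h, hQ => by
    simp only [List.Chain', List.isChain_cons_cons] at h ⊢
    exact ⟨⟨h.1, hQ a (by simp), hQ b (by simp)⟩,
      chain'_and_forall h.2 (fun c hc => hQ c (List.mem_cons_of_mem a hc))⟩

end Aux

namespace Aux

lemma getLast?_append_right {α : Type*} {A B : List α} (hB : B ≠ []) :
    (A ++ B).getLast? = B.getLast? := by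
  obtain ⟨b, B', rfl⟩ := List.exists_cons_of_ne_nil hB
  rw [List.getLast?_append]
  cases h : (b :: B').getLast? with
  | none => simp [List.getLast?_eq_none_iff] at h
  | some c => rfl

end Aux


/-- **Canonical form of replacement paths into `T₂`.** `T` is a shortest path tree of
`G` rooted at `s` (given by `VT`, `tp`), split into the subtrees `T₁` (containing `s`,
vertex set `S1`, ancestor-closed) and `T₂` (rooted at `z`, vertex set `S2`), with
`S1 ∪ S2 = V(T)` and `S1 ∩ S2 = {z}`.  Let `x, t ∈ S2 \ {z}` with `x ≠ t` and
`dist_{G−x}(s,t) < ∞`.  Then there exist a shortest `s`–`t` path `R` in `G − x`, a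
vertex `u ∈ S1 = V(T₁)`, and an edge `(u,v)` of `G` with `v ∈ S2 \ {z}`, such that `R`
is the concatenation of the tree path of `T` from `s` to `u`, the edge `(u,v)`, and a
path from `v` to `t` all of whose vertices lie in `S2 \ {z}`. -/
theorem replacement_path_decomposition {V : Type} [Fintype V] (G : WDigraph V)
    (hw : G.PosWeights)
    (s : V) (VT : Set V) (tp : V → List V) (hT : IsSPT G s VT tp)
    (z : V) (S1 S2 : Set V)
    (hunion : S1 ∪ S2 = VT) (hinter : S1 ∩ S2 = {z}) (hsS1 : s ∈ S1)
    (hanc : ∀ v ∈ S1, ∀ u ∈ tp v, u ∈ S1)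
    (hdesc : ∀ v ∈ S2, tp z <+: tp v)
    (x t : V) (hx : x ∈ S2 \ {z}) (ht : t ∈ S2 \ {z}) (hxt : x ≠ t)
    (hfin : (G.deleteVert x).dist s t ≠ ⊤) :
    ∃ (R l : List V) (u v : V),
      (G.deleteVert x).IsPathFrom s t R ∧
      ENNReal.ofReal (G.len R) = (G.deleteVert x).dist s t ∧
      u ∈ S1 ∧ G.Adj u v ∧ v ∈ S2 \ {z} ∧
      R = tp u ++ l ∧ l.head? = some v ∧ (∀ a ∈ l, a ∈ S2 \ {z}) := by
  classical
  -- basic membership facts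
  have hzS1 : z ∈ S1 := by
    have : z ∈ S1 ∩ S2 := by rw [hinter]; exact Set.mem_singleton z
    exact this.1
  have hxS1 : x ∉ S1 := by
    intro h
    have : x ∈ S1 ∩ S2 := ⟨h, hx.1⟩
    rw [hinter] at this
    exact hx.2 this
  have htS1 : t ∉ S1 := by
    intro h
    have : t ∈ S1 ∩ S2 := ⟨h, ht.1⟩
    rw [hinter] at this
    exact ht.2 this
  -- shortest replacement path exists (min over a finite nonempty set)
  set S : Set (List V) := {l | (G.deleteVert x).IsPathFrom s t l} with hS
  have hSfin : S.Finite :=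
    (List.finite_length_le V (Fintype.card V)).subset fun l hl => hl.2.1.length_le_card
  have hSne : S.Nonempty := by
    by_contra h
    rw [Set.not_nonempty_iff_eq_empty] at h
    apply hfin
    rw [WDigraph.dist]
    refine iInf_eq_top.mpr fun l => iInf_neg fun hl => ?_
    have : l ∈ S := hl
    rw [h] at this
    exact this
  obtain ⟨R₀, hR₀, hmin⟩ :=
    Set.exists_min_image S (fun l => ENNReal.ofReal (G.len l)) hSfin hSne
  have hdist : (G.deleteVert x).dist s t = ENNReal.ofReal (G.len R₀) :=
    le_antisymm (Aux.dist_le_path hR₀) (le_iInf₂ fun l hl => hmin l hl)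
  obtain ⟨hc₀, hn₀, hh₀, hl₀⟩ := hR₀
  have hR₀' : (G.deleteVert x).IsPathFrom s t R₀ := ⟨hc₀, hn₀, hh₀, hl₀⟩
  have hsR₀ : s ∈ R₀ := List.mem_of_mem_head? (Option.mem_def.mpr hh₀)
  -- split R₀ at the last vertex lying in S1
  obtain ⟨A, B, u, hsplit, hAlast, huS1, hBne, hBnotS1⟩ :=
    Aux.split_last_sat (· ∈ S1) R₀ ⟨s, hsR₀, hsS1⟩ (by
      intro w hw hPw
      rw [hl₀] at hw
      cases hw
      exact htS1 hPw)
  obtain ⟨v, B', rfl⟩ := List.exists_cons_of_ne_nil hBne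
  have hAne : A ≠ [] := by
    intro h; rw [h] at hAlast; simp at hAlast
  have hAhead : A.head? = some s := by
    rw [hsplit, Aux.head?_eq_of_prefix hAne] at hh₀
    exact hh₀
  have hcAB : (A ++ v :: B').Chain' (G.deleteVert x).Adj := hsplit ▸ hc₀
  have hcA : A.Chain' (G.deleteVert x).Adj := hcAB.prefix (List.prefix_append A _)
  have hcAG : A.Chain' G.Adj := hcA.imp fun a b h => h.1
  have hApathG : G.IsPathFrom s u A :=
    ⟨hcAG, (hsplit ▸ hn₀).sublist (List.sublist_append_left A _), hAhead, hAlast⟩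
  have huVT : u ∈ VT := hT.spans u (Aux.dist_ne_top_of_path hApathG)
  obtain ⟨htpc, htpn, htph, htpl⟩ := hT.path u huVT
  have htpne : tp u ≠ [] := by
    intro h; rw [h] at htph; simp at htph
  have htpS1 : ∀ a ∈ tp u, a ∈ S1 := hanc u huS1
  -- length comparison
  have hle : G.len (tp u) ≤ G.len A := by
    have h1 : ENNReal.ofReal (G.len (tp u)) ≤ ENNReal.ofReal (G.len A) :=
      (hT.shortest u huVT).le.trans (Aux.dist_le_path hApathG)
    exact (ENNReal.ofReal_le_ofReal_iff (Aux.len_nonneg hw hcAG)).mp h1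
  -- the junction edge
  obtain ⟨-, hcB, hjoin⟩ := List.isChain_append.mp hcAB
  have hAdjx : (G.deleteVert x).Adj u v := hjoin u (Option.mem_def.mpr hAlast) v rfl
  -- members of B lie in S2 \ {z}
  have hBmem : ∀ b ∈ v :: B', b ∈ S2 \ {z} := by
    intro b hb
    have hbR : b ∈ R₀ := by rw [hsplit]; exact List.mem_append_right A hb
    obtain ⟨l', hl'⟩ := Aux.path_to_mem hR₀' hbR
    have hl'G : G.IsPathFrom s b l' :=
      ⟨hl'.1.imp fun a b h => h.1, hl'.2.1, hl'.2.2.1, hl'.2.2.2⟩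
    have hbVT : b ∈ VT := hT.spans b (Aux.dist_ne_top_of_path hl'G)
    have hbS1 : b ∉ S1 := hBnotS1 b hb
    have hbS2 : b ∈ S2 := by
      rw [← hunion] at hbVT
      rcases hbVT with h | h
      · exact absurd h hbS1
      · exact h
    refine ⟨hbS2, fun hbz => ?_⟩
    have : b = z := hbz
    exact hbS1 (this ▸ hzS1)
  -- the new path R' = tp u ++ (v :: B')
  have hdisj : (tp u).Disjoint (v :: B') := by
    intro a ha hb
    have h1 : a ∈ S1 ∩ S2 := ⟨htpS1 a ha, (hBmem a hb).1⟩
    rw [hinter] at h1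
    exact (hBmem a hb).2 h1
  have hctp : (tp u).Chain' (G.deleteVert x).Adj := by
    have := Aux.chain'_and_forall (Q := fun a => a ≠ x) htpc
      (fun a ha h => hxS1 (h ▸ htpS1 a ha))
    exact this.imp fun a b h => ⟨h.1, h.2.1, h.2.2⟩
  have hpath' : (G.deleteVert x).IsPathFrom s t (tp u ++ v :: B') := by
    refine ⟨?_, ?_, ?_, ?_⟩
    · refine List.isChain_append.mpr ⟨hctp, hcB, ?_⟩
      intro a ha b hb
      rw [Option.mem_def, htpl] at ha
      rw [Option.mem_def] at hb
      cases ha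
      cases hb
      exact hAdjx
    · exact htpn.append ((hsplit ▸ hn₀).sublist (List.sublist_append_right A _)) hdisj
    · rw [Aux.head?_eq_of_prefix htpne]; exact htph
    · rw [Aux.getLast?_append_right (by simp)]
      rw [hsplit, Aux.getLast?_append_right (by simp)] at hl₀
      exact hl₀
  have hlenR' : G.len (tp u ++ v :: B') ≤ G.len R₀ := by
    rw [Aux.len_append G htpl (rfl : (v :: B').head? = some v), hsplit, Aux.len_append G hAlast (rfl : (v :: B').head? = some v)]
    linarith
  have hdist' : ENNReal.ofReal (G.len (tp u ++ v :: B')) = (G.deleteVert x).dist s t := by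
    refine le_antisymm ?_ (Aux.dist_le_path hpath')
    rw [hdist]
    exact ENNReal.ofReal_le_ofReal hlenR'
  exact ⟨tp u ++ v :: B', v :: B', u, v, hpath', hdist', huS1, hAdjx.1,
    hBmem v (List.mem_cons_self (a := v) (l := B')), rfl, rfl, hBmem⟩
end

section
/- Let B be a finite rooted binary tree in which every node has either zero or exactly two children, and let c assign to each node a natural number such that c(v) ≥ 2 for every node v and c(v) + 1 = c(v_L) + c(v_R) for every internal node v with children v_L, v_R. Then for every antichain A of nodes of B (a set of nodes no one of which is an ancestor of another), the sum of c(v) over v ∈ A is at most 2·c(root) − 2. -/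
/-- A finite rooted binary tree in which every node has either zero or exactly two
children. -/
inductive FullBTree where
  | leaf : FullBTree
  | node : FullBTree → FullBTree → FullBTree

namespace FullBTree

/-- The subtree of `t` rooted at the node addressed by the direction list `p`
(`false` = left child, `true` = right child); `none` if `p` is not a node of `t`. -/
def subtreeAt : FullBTree → List Bool → Option FullBTree
  | t, [] => some t
  | leaf, _ :: _ => none
  | node l _, false :: p => subtreeAt l p
  | node _ r, true :: p => subtreeAt r p

/-- `p` addresses a node of `t`. -/
def IsNode (t : FullBTree) (p : List Bool) : Prop := (subtreeAt t p).isSome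

end FullBTree

/-- **Antichain weight bound in a full binary tree.** Let `B` be a finite rooted binary
tree in which every node has zero or two children (nodes are addressed by direction
lists, the root by `[]`), and let `c` assign a natural number to each node such that
`c v ≥ 2` for every node `v` and `c v + 1 = c v_L + c v_R` for every internal node `v`
with children `v_L`, `v_R`.  Then for every antichain `A` of nodes of `B` (no node of
`A` is an ancestor of another, i.e. no address is a prefix of another),
`∑ v ∈ A, c v ≤ 2 · c(root) − 2`. -/
theorem antichain_weight_bound (B : FullBTree) (c : List Bool → ℕ)
    (hc2 : ∀ p, B.IsNode p → 2 ≤ c p)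
    (hcsum : ∀ p l r, B.subtreeAt p = some (FullBTree.node l r) →
      c p + 1 = c (p ++ [false]) + c (p ++ [true]))
    (A : Finset (List Bool))
    (hA : ∀ p ∈ A, B.IsNode p)
    (hanti : ∀ p ∈ A, ∀ q ∈ A, p <+: q → p = q) :
    ∑ p ∈ A, c p ≤ 2 * c [] - 2 := by
  induction B generalizing c A with
  | leaf =>
    have hroot : 2 ≤ c [] := hc2 [] (by simp [FullBTree.IsNode, FullBTree.subtreeAt])
    have hsub : A ⊆ {[]} := by
      intro p hp
      have h := hA p hp
      simp only [FullBTree.IsNode] at h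
      cases p with
      | nil => simp
      | cons b q => simp [FullBTree.subtreeAt] at h
    rcases Finset.subset_singleton_iff.mp hsub with h | h <;> simp [h] <;> omega
  | node l r ihl ihr =>
    have hroot : 2 ≤ c [] := hc2 [] (by simp [FullBTree.IsNode, FullBTree.subtreeAt])
    by_cases h0 : ([] : List Bool) ∈ A
    · have hA1 : A = {[]} := Finset.eq_singleton_iff_unique_mem.mpr
        ⟨h0, fun q hq => (hanti [] h0 q hq List.nil_prefix).symm⟩
      simp [hA1]; omega
    · have hside : ∀ (b : Bool) (t : FullBTree),
          (∀ (c' : List Bool → ℕ),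
            (∀ p, t.IsNode p → 2 ≤ c' p) →
            (∀ p l' r', t.subtreeAt p = some (FullBTree.node l' r') →
              c' p + 1 = c' (p ++ [false]) + c' (p ++ [true])) →
            ∀ (A' : Finset (List Bool)),
            (∀ p ∈ A', t.IsNode p) →
            (∀ p ∈ A', ∀ q ∈ A', p <+: q → p = q) →
            ∑ p ∈ A', c' p ≤ 2 * c' [] - 2) →
          FullBTree.subtreeAt (FullBTree.node l r) [b] = some t →
          ∑ p ∈ A.filter (fun p => p.headI = b), c p ≤ 2 * c [b] - 2 := by
        intro b t iht hbt
        have hrel : ∀ q, FullBTree.subtreeAt (FullBTree.node l r) (b :: q) = t.subtreeAt q := by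
          cases b <;> simp [FullBTree.subtreeAt] at hbt ⊢ <;> (intro q; rw [hbt])
        set S := A.filter (fun p => p.headI = b) with hSdef
        have hScons : ∀ p ∈ S, p = b :: p.tail := by
          intro p hp
          rw [hSdef, Finset.mem_filter] at hp
          obtain ⟨hpA, hph⟩ := hp
          cases p with
          | nil => exact absurd hpA h0
          | cons x q => simp at hph; simp [hph]
        have hinj : Set.InjOn List.tail (S : Set (List Bool)) := by
          intro p hp q hq hpq
          rw [hScons p hp, hScons q hq, hpq]
        have hsum : ∑ p ∈ S, c p = ∑ q ∈ S.image List.tail, c (b :: q) := by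
          rw [Finset.sum_image (fun p hp q hq h => hinj hp hq h)]
          exact Finset.sum_congr rfl fun p hp => by rw [← hScons p hp]
        rw [hsum]
        have := iht (fun q => c (b :: q))
          (fun p hp => hc2 (b :: p) (by simpa [FullBTree.IsNode, hrel] using hp))
          (fun p l' r' h => by
            have := hcsum (b :: p) l' r' (by rw [hrel]; exact h)
            simpa using this)
          (S.image List.tail)
          (fun q hq => by
            obtain ⟨p, hp, rfl⟩ := Finset.mem_image.mp hq
            have hpA := (Finset.mem_filter.mp hp).1
            have h := hA p hpA
            rw [hScons p hp] at h
            simpa [FullBTree.IsNode, hrel] using h)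
          (fun q hq q' hq' hpre => by
            obtain ⟨p, hp, rfl⟩ := Finset.mem_image.mp hq
            obtain ⟨p', hp', rfl⟩ := Finset.mem_image.mp hq'
            have hpA := (Finset.mem_filter.mp hp).1
            have hpA' := (Finset.mem_filter.mp hp').1
            have hpre' : p <+: p' := by
              rw [hScons p hp, hScons p' hp']
              exact List.cons_prefix_cons.mpr ⟨rfl, hpre⟩
            rw [hanti p hpA p' hpA' hpre'])
        simpa using this
      have hL := hside false l ihl (by simp [FullBTree.subtreeAt])
      have hR := hside true r ihr (by simp [FullBTree.subtreeAt])
      have hsplit := Finset.sum_filter_add_sum_filter_not A (fun p => p.headI = false) c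
      have hfilt : A.filter (fun p => ¬ p.headI = false) = A.filter (fun p => p.headI = true) := by
        apply Finset.filter_congr
        intro p _
        simp
      rw [hfilt] at hsplit
      have hnode := hcsum [] l r rfl
      simp only [List.nil_append] at hnode
      have h2L : 2 ≤ c [false] :=
        hc2 [false] (by simp [FullBTree.IsNode, FullBTree.subtreeAt])
      have h2R : 2 ≤ c [true] :=
        hc2 [true] (by simp [FullBTree.IsNode, FullBTree.subtreeAt])
      rw [← hsplit]
      omega
end
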